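/- arXiv:2412.18014 — 6 statements merged into one kernel-verified Lean document; each statement's English description precedes it below -/
import Mathlib

section
/- For every a > 0, sup_{z∈ℝ} |d(z, [−1,1]) − π_a(z)| ≤ 2/a. -/
noncomputable section

/-- The logistic function `φ`. -/
def logistic (z : ℝ) : ℝ := Real.exp z / (1 + Real.exp z)

/-- The smooth approximation `π_a` of the distance to `[-1,1]`. -/
def pia (a z : ℝ) : ℝ :=
  (Real.log (1 + Real.exp (a * (z - 1))) + Real.log (1 + Real.exp (a * (-z - 1)))) / a

/-- Euclidean distance from `z` to the cube `[-1,1]ⁿ`. -/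
def cubeDist {n : ℕ} (z : Fin n → ℝ) : ℝ :=
  Real.sqrt (∑ i, max (|z i| - 1) 0 ^ 2)

end

lemma softplus_lb (x : ℝ) : max x 0 ≤ Real.log (1 + Real.exp x) := by
  rcases le_total x 0 with h | h
  · simp only [max_eq_right h]
    apply Real.log_nonneg
    nlinarith [Real.exp_pos x]
  · rw [max_eq_left h]
    calc x = Real.log (Real.exp x) := (Real.log_exp x).symm
    _ ≤ Real.log (1 + Real.exp x) := by
        apply Real.log_le_log (Real.exp_pos x); linarith

lemma softplus_ub (x : ℝ) : Real.log (1 + Real.exp x) ≤ max x 0 + Real.log 2 := by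
  rcases le_total x 0 with h | h
  · rw [max_eq_right h]
    have : (1 : ℝ) + Real.exp x ≤ 2 := by
      have := Real.exp_le_one_iff.mpr h; linarith
    calc Real.log (1 + Real.exp x) ≤ Real.log 2 := by
          apply Real.log_le_log (by positivity) this
    _ = 0 + Real.log 2 := by ring
  · rw [max_eq_left h]
    have h1 : (1 : ℝ) + Real.exp x ≤ 2 * Real.exp x := by
      have := Real.one_le_exp h; linarith
    calc Real.log (1 + Real.exp x) ≤ Real.log (2 * Real.exp x) := by
          apply Real.log_le_log (by positivity) h1
    _ = x + Real.log 2 := by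
          rw [Real.log_mul (by norm_num) (Real.exp_ne_zero x), Real.log_exp]; ring

/-- `π_a` approximates the distance to `[-1,1]` uniformly within `2/a`. -/
theorem stmt_4 (a : ℝ) (ha : 0 < a) :
    ∀ z : ℝ, |max (|z| - 1) 0 - pia a z| ≤ 2 / a := by
  intro z
  set u := a * (z - 1) with hu
  set v := a * (-z - 1) with hv
  have key2 : max (|z| - 1) 0 = max (z - 1) 0 + max (-z - 1) 0 := by
    rcases le_total z (-1) with h | h
    · rw [abs_of_nonpos (by linarith), max_eq_right (by linarith : z - 1 ≤ 0),
        max_eq_left (by linarith : (0:ℝ) ≤ -z - 1)]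
      ring
    · rcases le_total 1 z with h' | h'
      · rw [abs_of_nonneg (by linarith), max_eq_left (by linarith : (0:ℝ) ≤ z - 1),
          max_eq_right (by linarith : -z - 1 ≤ 0)]
        ring
      · have ha1 : |z| - 1 ≤ 0 := by
          rcases abs_cases z with ⟨e, _⟩ | ⟨e, _⟩ <;> linarith
        rw [max_eq_right ha1, max_eq_right (by linarith : z - 1 ≤ 0),
          max_eq_right (by linarith : -z - 1 ≤ 0)]
        ring
  have ku : max u 0 = a * max (z - 1) 0 := by
    rw [hu, mul_max_of_nonneg _ _ ha.le, mul_zero]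
  have kv : max v 0 = a * max (-z - 1) 0 := by
    rw [hv, mul_max_of_nonneg _ _ ha.le, mul_zero]
  have key : a * max (|z| - 1) 0 = max u 0 + max v 0 := by
    rw [key2, mul_add, ku, kv]
  have hlb := softplus_lb u
  have hlb' := softplus_lb v
  have hub := softplus_ub u
  have hub' := softplus_ub v
  have hlog2 : Real.log 2 ≤ 1 := by
    have := Real.log_two_lt_d9; linarith
  have hd : a * pia a z = Real.log (1 + Real.exp u) + Real.log (1 + Real.exp v) := by
    rw [show pia a z = (Real.log (1 + Real.exp u) + Real.log (1 + Real.exp v)) / a from rfl]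
    field_simp
  have h1 : pia a z - max (|z| - 1) 0 ≤ 2 / a := by
    rw [le_div_iff₀ ha]; nlinarith
  have h2 : max (|z| - 1) 0 - pia a z ≤ 2 / a := by
    rw [le_div_iff₀ ha]; nlinarith
  rw [abs_le]
  exact ⟨by linarith, h2⟩
end

section
/- For every a > 0 and every j ∈ {1,2,3,4}, the j-th derivative of π_a satisfies sup_{z∈ℝ} |π_a^{(j)}(z)| ≤ 2 a^{j−1}. -/
noncomputable section Aux

namespace Stmt5Aux

def s : ℝ → ℝ := fun t => Real.exp t / (1 + Real.exp t)

def s1 : ℝ → ℝ := fun t => s t * (1 - s t)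

def s2 : ℝ → ℝ := fun t => s1 t * (1 - 2 * s t)

def s3 : ℝ → ℝ := fun t => s1 t * (1 - 6 * s t + 6 * s t ^ 2)

lemma one_add_exp_pos (t : ℝ) : 0 < 1 + Real.exp t := by positivity

lemma s_pos (t : ℝ) : 0 < s t := div_pos (Real.exp_pos t) (one_add_exp_pos t)

lemma s_lt_one (t : ℝ) : s t < 1 := by
  rw [s, div_lt_one (one_add_exp_pos t)]; linarith

lemma hasDerivAt_s (t : ℝ) : HasDerivAt s (s1 t) t := by
  have h := (Real.hasDerivAt_exp t).div ((hasDerivAt_const t (1:ℝ)).add (Real.hasDerivAt_exp t))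
    (ne_of_gt (one_add_exp_pos t))
  refine h.congr_deriv ?_
  have hne := ne_of_gt (one_add_exp_pos t)
  simp only [Pi.add_apply, s1, s]
  field_simp
  ring

lemma hasDerivAt_s1 (t : ℝ) : HasDerivAt s1 (s2 t) t := by
  have h := (hasDerivAt_s t).mul ((hasDerivAt_const t (1:ℝ)).sub (hasDerivAt_s t))
  refine h.congr_deriv ?_
  simp only [Pi.sub_apply, s2, s1]
  ring

lemma hasDerivAt_s2 (t : ℝ) : HasDerivAt s2 (s3 t) t := by
  have h := (hasDerivAt_s1 t).mul ((hasDerivAt_const t (1:ℝ)).sub ((hasDerivAt_s t).const_mul 2))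
  refine h.congr_deriv ?_
  simp only [Pi.sub_apply, s3, s2, s1]
  ring

lemma abs_s_le (t : ℝ) : |s t| ≤ 1 := by
  have h1 := s_pos t; have h2 := s_lt_one t
  rw [abs_le]; constructor <;> linarith

lemma abs_s1_le (t : ℝ) : |s1 t| ≤ 1 := by
  have h1 := s_pos t; have h2 := s_lt_one t
  rw [s1, abs_le]; constructor <;> nlinarith

lemma abs_s2_le (t : ℝ) : |s2 t| ≤ 1 := by
  have h1 := s_pos t; have h2 := s_lt_one t
  have hp : 0 < s t * (1 - s t) := mul_pos h1 (by linarith)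
  have hq : s t * (1 - s t) ≤ 1 / 4 := by nlinarith [sq_nonneg (1 - 2 * s t)]
  rw [s2, s1, abs_le]
  constructor
  · nlinarith [mul_nonneg hp.le (show (0:ℝ) ≤ 2 - 2 * s t by linarith)]
  · nlinarith [mul_nonneg hp.le (show (0:ℝ) ≤ 2 * s t by linarith)]

lemma abs_s3_le (t : ℝ) : |s3 t| ≤ 1 := by
  have h1 := s_pos t; have h2 := s_lt_one t
  have hp : 0 < s t * (1 - s t) := mul_pos h1 (by linarith)
  have hq : s t * (1 - s t) ≤ 1 / 4 := by nlinarith [sq_nonneg (1 - 2 * s t)]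
  rw [s3, s1, abs_le]
  constructor
  · nlinarith [mul_nonneg hp.le
      (show (0:ℝ) ≤ 1 - 6 * s t + 6 * s t ^ 2 + 1 / 2 by nlinarith [sq_nonneg (2 * s t - 1)])]
  · nlinarith [mul_nonneg hp.le (show (0:ℝ) ≤ 6 * s t * (1 - s t) by nlinarith)]

variable (a : ℝ)

def g1 : ℝ → ℝ := fun z => s (a * (z - 1)) - s (a * (-z - 1))

def g2 : ℝ → ℝ := fun z => a * (s1 (a * (z - 1)) + s1 (a * (-z - 1)))

def g3 : ℝ → ℝ := fun z => a ^ 2 * (s2 (a * (z - 1)) - s2 (a * (-z - 1)))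

def g4 : ℝ → ℝ := fun z => a ^ 3 * (s3 (a * (z - 1)) + s3 (a * (-z - 1)))

lemma hasDerivAt_u (z : ℝ) : HasDerivAt (fun z : ℝ => a * (z - 1)) a z := by
  simpa using (((hasDerivAt_id z).sub_const 1).const_mul a)

lemma hasDerivAt_v (z : ℝ) : HasDerivAt (fun z : ℝ => a * (-z - 1)) (-a) z := by
  have h := (((hasDerivAt_id z).neg.sub_const 1).const_mul a)
  simpa [mul_comm] using h

lemma hasDerivAt_pia (ha : 0 < a) (z : ℝ) : HasDerivAt (pia a) (g1 a z) z := by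
  have hu := hasDerivAt_u a z
  have hv := hasDerivAt_v a z
  have he1 : HasDerivAt (fun z : ℝ => Real.exp (a * (z - 1)))
      (Real.exp (a * (z - 1)) * a) z := (Real.hasDerivAt_exp _).comp z hu
  have he2 : HasDerivAt (fun z : ℝ => Real.exp (a * (-z - 1)))
      (Real.exp (a * (-z - 1)) * (-a)) z := (Real.hasDerivAt_exp _).comp z hv
  have hA : HasDerivAt (fun z : ℝ => 1 + Real.exp (a * (z - 1)))
      (Real.exp (a * (z - 1)) * a) z := by simpa using (he1.const_add 1)
  have hB : HasDerivAt (fun z : ℝ => 1 + Real.exp (a * (-z - 1)))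
      (Real.exp (a * (-z - 1)) * (-a)) z := by simpa using (he2.const_add 1)
  have hlA := hA.log (ne_of_gt (one_add_exp_pos _))
  have hlB := hB.log (ne_of_gt (one_add_exp_pos _))
  have h := ((hlA.add hlB).div_const a)
  have heq : (Real.exp (a * (z - 1)) * a / (1 + Real.exp (a * (z - 1))) +
      Real.exp (a * (-z - 1)) * (-a) / (1 + Real.exp (a * (-z - 1)))) / a = g1 a z := by
    have h1 := ne_of_gt (one_add_exp_pos (a * (z - 1)))
    have h2 := ne_of_gt (one_add_exp_pos (a * (-z - 1)))
    rw [show g1 a z = Real.exp (a * (z - 1)) / (1 + Real.exp (a * (z - 1))) -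
      Real.exp (a * (-z - 1)) / (1 + Real.exp (a * (-z - 1))) from rfl]
    field_simp
    ring
  rw [heq] at h
  exact h

lemma hasDerivAt_g1 (z : ℝ) : HasDerivAt (g1 a) (g2 a z) z := by
  have h := ((hasDerivAt_s (a * (z - 1))).comp z (hasDerivAt_u a z)).sub
    ((hasDerivAt_s (a * (-z - 1))).comp z (hasDerivAt_v a z))
  refine h.congr_deriv ?_
  simp only [g2]
  ring

lemma hasDerivAt_g2 (z : ℝ) : HasDerivAt (g2 a) (g3 a z) z := by
  have h := (((hasDerivAt_s1 (a * (z - 1))).comp z (hasDerivAt_u a z)).add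
    ((hasDerivAt_s1 (a * (-z - 1))).comp z (hasDerivAt_v a z))).const_mul a
  refine h.congr_deriv ?_
  simp only [g3]
  ring

lemma hasDerivAt_g3 (z : ℝ) : HasDerivAt (g3 a) (g4 a z) z := by
  have h := (((hasDerivAt_s2 (a * (z - 1))).comp z (hasDerivAt_u a z)).sub
    ((hasDerivAt_s2 (a * (-z - 1))).comp z (hasDerivAt_v a z))).const_mul (a ^ 2)
  refine h.congr_deriv ?_
  simp only [g4]
  ring

end Stmt5Aux

end Aux

open Stmt5Aux in
/-- Bounds on the first four derivatives of `π_a`. -/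
theorem stmt_5 (a : ℝ) (ha : 0 < a) :
    ∀ j ∈ ({1, 2, 3, 4} : Finset ℕ), ∀ z : ℝ,
      |iteratedDeriv j (pia a) z| ≤ 2 * a ^ (j - 1) := by
  have e1 : deriv (pia a) = g1 a := funext fun z => (hasDerivAt_pia a ha z).deriv
  have e2 : deriv (g1 a) = g2 a := funext fun z => (hasDerivAt_g1 a z).deriv
  have e3 : deriv (g2 a) = g3 a := funext fun z => (hasDerivAt_g2 a z).deriv
  have e4 : deriv (g3 a) = g4 a := funext fun z => (hasDerivAt_g3 a z).deriv
  intro j hj z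
  fin_cases hj
  · rw [iteratedDeriv_one, e1]
    have h := (abs_sub (s (a * (z - 1))) (s (a * (-z - 1)))).trans
      (add_le_add (abs_s_le _) (abs_s_le _))
    calc |g1 a z| ≤ 1 + 1 := by simpa [g1] using h
      _ ≤ 2 * a ^ (1 - 1) := by norm_num
  · rw [show (2:ℕ) = 1 + 1 from rfl, iteratedDeriv_succ, iteratedDeriv_one, e1, e2]
    have h := (abs_add_le (s1 (a * (z - 1))) (s1 (a * (-z - 1)))).trans
      (add_le_add (abs_s1_le _) (abs_s1_le _))
    have : |g2 a z| ≤ a * 2 := by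
      rw [g2, abs_mul, abs_of_pos ha]
      nlinarith [abs_nonneg (s1 (a * (z - 1)) + s1 (a * (-z - 1)))]
    simpa [mul_comm] using this
  · rw [show (3:ℕ) = 1 + 1 + 1 from rfl, iteratedDeriv_succ, iteratedDeriv_succ,
      iteratedDeriv_one, e1, e2, e3]
    have h := (abs_sub (s2 (a * (z - 1))) (s2 (a * (-z - 1)))).trans
      (add_le_add (abs_s2_le _) (abs_s2_le _))
    have hp : (0:ℝ) < a ^ 2 := by positivity
    have : |g3 a z| ≤ a ^ 2 * 2 := by
      rw [g3, abs_mul, abs_of_pos hp]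
      nlinarith [abs_nonneg (s2 (a * (z - 1)) - s2 (a * (-z - 1)))]
    simpa [mul_comm] using this
  · rw [show (4:ℕ) = 1 + 1 + 1 + 1 from rfl, iteratedDeriv_succ, iteratedDeriv_succ,
      iteratedDeriv_succ, iteratedDeriv_one, e1, e2, e3, e4]
    have h := (abs_add_le (s3 (a * (z - 1))) (s3 (a * (-z - 1)))).trans
      (add_le_add (abs_s3_le _) (abs_s3_le _))
    have hp : (0:ℝ) < a ^ 3 := by positivity
    have : |g4 a z| ≤ a ^ 3 * 2 := by
      rw [g4, abs_mul, abs_of_pos hp]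
      nlinarith [abs_nonneg (s3 (a * (z - 1)) + s3 (a * (-z - 1)))]
    simpa [mul_comm] using this
end

section
/- Let n ≥ 1, x ∈ ℝⁿ, β₁, β₂ > 0 and c ∈ ℝ, and let ψ(z) = φ(β₁ z/√n − c). Then |ψ(d(x, [−1,1]ⁿ)) − ψ(√(Σ_{i=1}^n π_{β₂}(x_i)²))| ≤ 2β₁/β₂. -/
lemma logistic_lip (u v : ℝ) : |logistic u - logistic v| ≤ |u - v| := by
  have key : ∀ a b : ℝ, a ≤ b → logistic b - logistic a ≤ b - a := by
    intro a b hab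
    have ha := Real.exp_pos a
    have hb := Real.exp_pos b
    have h1 : Real.exp b - Real.exp a ≤ Real.exp b * (b - a) := by
      have := Real.add_one_le_exp (a - b)
      have h := mul_le_mul_of_nonneg_left this (le_of_lt hb)
      rw [← Real.exp_add] at h
      simp only [add_sub_cancel] at h
      nlinarith [Real.exp_pos b]
    have hlog : logistic b - logistic a =
        (Real.exp b - Real.exp a) / ((1 + Real.exp a) * (1 + Real.exp b)) := by
      unfold logistic
      field_simp
      ring
    rw [hlog]
    rw [div_le_iff₀ (by positivity)]
    nlinarith [Real.exp_le_exp.mpr hab]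
  have mono : ∀ a b : ℝ, a ≤ b → logistic a ≤ logistic b := by
    intro a b hab
    unfold logistic
    rw [div_le_div_iff₀ (by positivity) (by positivity)]
    nlinarith [Real.exp_le_exp.mpr hab, Real.exp_pos a, Real.exp_pos b]
  rcases le_total u v with h | h
  · rw [abs_of_nonpos (by linarith [mono u v h]),
      abs_of_nonpos (by linarith : u - v ≤ 0)]
    have := key u v h
    linarith
  · have := key v u h
    rw [abs_of_nonneg (by linarith [mono v u h]), abs_of_nonneg (by linarith : (0:ℝ) ≤ u - v)]
    linarith

lemma log_one_add_exp_lb (t : ℝ) : max t 0 ≤ Real.log (1 + Real.exp t) := by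
  have h1 : (0:ℝ) < Real.exp t := Real.exp_pos t
  apply max_le
  · calc t = Real.log (Real.exp t) := (Real.log_exp t).symm
      _ ≤ _ := Real.log_le_log h1 (by linarith)
  · exact Real.log_nonneg (by linarith)

lemma log_one_add_exp_ub (t : ℝ) : Real.log (1 + Real.exp t) ≤ max t 0 + Real.log 2 := by
  have h1 : (0:ℝ) < Real.exp t := Real.exp_pos t
  rcases le_total t 0 with h | h
  · have he : Real.exp t ≤ 1 := Real.exp_le_one_iff.mpr h
    have : Real.log (1 + Real.exp t) ≤ Real.log 2 :=
      Real.log_le_log (by linarith) (by linarith)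
    have h0 : max t 0 = 0 := max_eq_right h
    rw [h0]; linarith
  · have he : (1:ℝ) ≤ Real.exp t := Real.one_le_exp h
    have : Real.log (1 + Real.exp t) ≤ Real.log (2 * Real.exp t) :=
      Real.log_le_log (by linarith) (by linarith)
    rw [Real.log_mul (by norm_num) (ne_of_gt h1), Real.log_exp] at this
    have h0 : max t 0 = t := max_eq_left h
    rw [h0]; linarith

lemma maxsum (z : ℝ) : max (z - 1) 0 + max (-z - 1) 0 = max (|z| - 1) 0 := by
  rcases le_total 0 z with hz | hz
  · rw [abs_of_nonneg hz, max_eq_right (by linarith : -z - 1 ≤ 0), add_zero]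
  · rw [abs_of_nonpos hz, max_eq_right (by linarith : z - 1 ≤ 0), zero_add]

lemma pia_bounds (a z : ℝ) (ha : 0 < a) :
    max (|z| - 1) 0 ≤ pia a z ∧ pia a z ≤ max (|z| - 1) 0 + 2 / a := by
  have l1 := log_one_add_exp_lb (a * (z - 1))
  have l2 := log_one_add_exp_lb (a * (-z - 1))
  have u1 := log_one_add_exp_ub (a * (z - 1))
  have u2 := log_one_add_exp_ub (a * (-z - 1))
  have hm1 : max (a * (z - 1)) 0 = a * max (z - 1) 0 := by
    rw [mul_max_of_nonneg _ _ (le_of_lt ha), mul_zero]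
  have hm2 : max (a * (-z - 1)) 0 = a * max (-z - 1) 0 := by
    rw [mul_max_of_nonneg _ _ (le_of_lt ha), mul_zero]
  have hsum : max (a * (z - 1)) 0 + max (a * (-z - 1)) 0 = a * max (|z| - 1) 0 := by
    rw [hm1, hm2, ← mul_add, maxsum]
  have hlog2 : Real.log 2 ≤ 1 := by
    have := Real.log_le_sub_one_of_pos (by norm_num : (0:ℝ) < 2)
    linarith
  constructor
  · unfold pia
    rw [le_div_iff₀ ha, mul_comm]
    linarith
  · unfold pia
    rw [div_le_iff₀ ha]
    have : (max (|z| - 1) 0 + 2 / a) * a = a * max (|z| - 1) 0 + 2 := by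
      field_simp
    rw [this]
    linarith

/-- Replacing the distance to the cube by its smooth `π_{β₂}`-approximation inside
`ψ(z) = φ(β₁ z/√n - c)` changes the value by at most `2β₁/β₂`. -/
theorem stmt_7 (n : ℕ) (hn : 1 ≤ n) (x : Fin n → ℝ) (β₁ β₂ c : ℝ)
    (h1 : 0 < β₁) (h2 : 0 < β₂) :
    |logistic (β₁ * cubeDist x / Real.sqrt n - c) -
        logistic (β₁ * Real.sqrt (∑ i, pia β₂ (x i) ^ 2) / Real.sqrt n - c)| ≤
      2 * β₁ / β₂ := by
  set m : Fin n → ℝ := fun i => max (|x i| - 1) 0 with hm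
  set p : Fin n → ℝ := fun i => pia β₂ (x i) with hp
  have hbounds : ∀ i, m i ≤ p i ∧ p i ≤ m i + 2 / β₂ := fun i => pia_bounds β₂ (x i) h2
  -- Euclidean space vectors
  set u : EuclideanSpace ℝ (Fin n) := WithLp.toLp 2 (fun i => m i) with hu
  set v : EuclideanSpace ℝ (Fin n) := WithLp.toLp 2 (fun i => p i) with hv
  have hmn : ∀ i, 0 ≤ m i := fun i => le_max_right _ _
  have hpn : ∀ i, 0 ≤ p i := fun i => le_trans (hmn i) (hbounds i).1
  have hnu : ‖u‖ = Real.sqrt (∑ i, m i ^ 2) := by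
    rw [EuclideanSpace.norm_eq]
    congr 1
    refine Finset.sum_congr rfl fun i _ => ?_
    rw [Real.norm_eq_abs, sq_abs]
  have hnv : ‖v‖ = Real.sqrt (∑ i, p i ^ 2) := by
    rw [EuclideanSpace.norm_eq]
    congr 1
    refine Finset.sum_congr rfl fun i _ => ?_
    rw [Real.norm_eq_abs, sq_abs]
  have hdiff : |‖u‖ - ‖v‖| ≤ ‖u - v‖ := abs_norm_sub_norm_le u v
  have hnd : ‖u - v‖ ≤ Real.sqrt n * (2 / β₂) := by
    rw [EuclideanSpace.norm_eq]
    have hbd : ∑ i, ‖(u - v) i‖ ^ 2 ≤ ∑ i : Fin n, (2 / β₂) ^ 2 := by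
      refine Finset.sum_le_sum fun i _ => ?_
      have : ‖(u - v) i‖ = |m i - p i| := by
        simp [hu, hv, Real.norm_eq_abs]
      rw [this, sq_abs]
      have := hbounds i
      nlinarith
    calc Real.sqrt (∑ i, ‖(u - v) i‖ ^ 2) ≤ Real.sqrt (∑ i : Fin n, (2 / β₂) ^ 2) :=
          Real.sqrt_le_sqrt hbd
      _ = Real.sqrt (n * (2 / β₂) ^ 2) := by
          rw [Finset.sum_const, Finset.card_univ, Fintype.card_fin, nsmul_eq_mul]
      _ = Real.sqrt n * (2 / β₂) := by
          rw [Real.sqrt_mul (Nat.cast_nonneg n), Real.sqrt_sq (by positivity)]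
  have hcd : cubeDist x = ‖u‖ := by rw [hnu]; rfl
  have hsn : (0:ℝ) < Real.sqrt n := Real.sqrt_pos.mpr (by exact_mod_cast Nat.pos_of_ne_zero (by omega))
  have harg : |(β₁ * cubeDist x / Real.sqrt n - c) -
      (β₁ * Real.sqrt (∑ i, pia β₂ (x i) ^ 2) / Real.sqrt n - c)| ≤ 2 * β₁ / β₂ := by
    have heq : (β₁ * cubeDist x / Real.sqrt n - c) -
        (β₁ * Real.sqrt (∑ i, pia β₂ (x i) ^ 2) / Real.sqrt n - c)
        = β₁ / Real.sqrt n * (‖u‖ - ‖v‖) := by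
      rw [hcd, hnv]
      field_simp
      ring
    rw [heq, abs_mul, abs_of_pos (by positivity : (0:ℝ) < β₁ / Real.sqrt n)]
    calc β₁ / Real.sqrt n * |‖u‖ - ‖v‖| ≤ β₁ / Real.sqrt n * (Real.sqrt n * (2 / β₂)) := by
          apply mul_le_mul_of_nonneg_left (le_trans hdiff hnd) (by positivity)
      _ = 2 * β₁ / β₂ := by field_simp
  exact le_trans (logistic_lip _ _) harg
end

section
/- Let p_1, …, p_m be connected LDPs in dimension n with zero constant term, with p_i of total degree at most Δ_i. Suppose there are subsets S_1, …, S_m ⊆ {1,…,n} and constants c, γ > 0 such that: (1) S_i ⊆ p_i for every i ∈ [m]; and (2) for every j ∈ [m] and all 1 ≤ k₁ < … < k_j ≤ m, |S_{k₁} ∪ … ∪ S_{k_j}| ≥ c j^γ. Then ‖Σ_{i=1}^m p_i‖ ≤ ((1 + max_{i∈[m]} Δ_i)/c)^{1/γ} · max_{i∈[m]} ‖p_i‖. -/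
open MeasureTheory ProbabilityTheory Filter
open scoped ENNReal NNReal

noncomputable section

/-- Index type of the variables `x_{ij}`, `1 ≤ i < j ≤ n`. -/
abbrev Edge (n : ℕ) : Type := {e : Fin n × Fin n // e.1 < e.2}

/-- A (low-degree) polynomial in the variables `x_{ij}`, `1 ≤ i < j ≤ n`. -/
abbrev LDP (n : ℕ) : Type := MvPolynomial (Edge n) ℝ

/-- `‖p‖ = max_α |c_{p,α}|`. -/
def LDPnorm {n : ℕ} (p : LDP n) : ℝ :=
  ⨆ α : Edge n →₀ ℕ, |MvPolynomial.coeff α p|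

/-- Evaluation of an LDP at the entries `(M i j)_{i<j}` of a matrix. -/
def evalMat {n : ℕ} (p : LDP n) (M : Matrix (Fin n) (Fin n) ℝ) : ℝ :=
  MvPolynomial.eval (fun e : Edge n => M e.val.1 e.val.2) p

/-- The vertex set `V_α` of the factor graph of an exponent `α`. -/
def vertexSet {n : ℕ} (α : Edge n →₀ ℕ) : Set (Fin n) :=
  {k | ∃ e : Edge n, α e ≠ 0 ∧ (e.val.1 = k ∨ e.val.2 = k)}

/-- The factor graph `G_α`. -/
def graphOf {n : ℕ} (α : Edge n →₀ ℕ) : SimpleGraph (Fin n) where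
  Adj i j := (∃ h : i < j, α ⟨(i, j), h⟩ ≠ 0) ∨ (∃ h : j < i, α ⟨(j, i), h⟩ ≠ 0)
  symm := ⟨by intro i j h; exact h.symm⟩
  loopless := ⟨by intro i h; rcases h with ⟨h, _⟩ | ⟨h, _⟩ <;> exact absurd h (lt_irrefl i)⟩

/-- `x^α` is connected: all vertices of `V_α` are mutually reachable in `G_α`
(vacuously true for the constant monomial). -/
def ConnectedExp {n : ℕ} (α : Edge n →₀ ℕ) : Prop :=
  ∀ u ∈ vertexSet α, ∀ v ∈ vertexSet α, (graphOf α).Reachable u v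

/-- `G_α` is a tree. -/
def IsTreeExp {n : ℕ} (α : Edge n →₀ ℕ) : Prop :=
  ConnectedExp α ∧ (graphOf α).IsAcyclic

/-- every entry of `α` is at most 2. -/
def MaxTwo {n : ℕ} (α : Edge n →₀ ℕ) : Prop := ∀ e : Edge n, α e ≤ 2

/-- `G_α` a tree and all entries of `α` at most `2`. -/
def IsTree2 {n : ℕ} (α : Edge n →₀ ℕ) : Prop := IsTreeExp α ∧ MaxTwo α

/-- `‖α‖₁`. -/
def expDeg {n : ℕ} (α : Edge n →₀ ℕ) : ℕ := α.sum fun _ k => k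

/-- `p ∈ T_{n,2,Δ}`. -/
def MemT2 {n : ℕ} (Δ : ℕ) (p : LDP n) : Prop :=
  ∀ α : Edge n →₀ ℕ, MvPolynomial.coeff α p ≠ 0 → IsTree2 α ∧ expDeg α ≤ Δ

/-- `p` is a connected LDP. -/
def ConnectedLDP {n : ℕ} (p : LDP n) : Prop :=
  ∀ α : Edge n →₀ ℕ, MvPolynomial.coeff α p ≠ 0 → ConnectedExp α

/-- `p` contains node `i` (the constant monomial contains every node). -/
def ContainsNode {n : ℕ} (i : Fin n) (p : LDP n) : Prop :=
  ∀ α : Edge n →₀ ℕ, MvPolynomial.coeff α p ≠ 0 → α = 0 ∨ i ∈ vertexSet α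

/-- `S ⊆ p` (the constant monomial contains every node). -/
def ContainsSet {n : ℕ} (S : Finset (Fin n)) (p : LDP n) : Prop :=
  ∀ α : Edge n →₀ ℕ, MvPolynomial.coeff α p ≠ 0 → α = 0 ∨ (S : Set (Fin n)) ⊆ vertexSet α

open scoped Classical in
/-- The tree projection `p^Tr`. -/
def treeProj {n : ℕ} (p : LDP n) : LDP n :=
  ∑ α ∈ p.support, if IsTree2 α then MvPolynomial.monomial α (MvPolynomial.coeff α p) else 0

instance matrixMeasurableSpace {m n α : Type*} [MeasurableSpace α] :
    MeasurableSpace (Matrix m n α) :=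
  inferInstanceAs (MeasurableSpace (m → n → α))

/-- Build a symmetric zero-diagonal matrix out of upper-triangular entries. -/
def symmetrize {n : ℕ} (g : Edge n → ℝ) : Matrix (Fin n) (Fin n) ℝ :=
  Matrix.of fun i j =>
    if h : i < j then g ⟨(i, j), h⟩ else if h' : j < i then g ⟨(j, i), h'⟩ else 0

/-- The GOE(n) distribution, as a measure on symmetric zero-diagonal matrices:
i.i.d. `N(0, 1/n)` entries above the diagonal. -/
def GOEMeasure (n : ℕ) : Measure (Matrix (Fin n) (Fin n) ℝ) :=
  (Measure.pi fun _ : Edge n => gaussianReal 0 (n : ℝ≥0)⁻¹).map symmetrize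

/-- The law of `-(B - d/n)/√(d(1-d/n))`, `B ∼ Bernoulli(d/n)`. -/
def hatGEntry (n : ℕ) (d : ℝ) : Measure ℝ :=
  (Real.toNNReal (1 - d / n)) • Measure.dirac ((d / n) / Real.sqrt (d * (1 - d / n)))
    + (Real.toNNReal (d / n)) • Measure.dirac (-(1 - d / n) / Real.sqrt (d * (1 - d / n)))

instance hatGEntry.isFiniteMeasure (n : ℕ) (d : ℝ) : IsFiniteMeasure (hatGEntry n d) := by
  unfold hatGEntry; infer_instance

/-- The distribution `Ĝ(n, d/n)` of the centered rescaled adjacency matrix. -/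
def hatGMeasure (n : ℕ) (d : ℝ) : Measure (Matrix (Fin n) (Fin n) ℝ) :=
  (Measure.pi fun _ : Edge n => hatGEntry n d).map symmetrize

/-- `p(M) = (p_1(M),…,p_n(M))`. -/
def pEval {n : ℕ} (p : Fin n → LDP n) (M : Matrix (Fin n) (Fin n) ℝ) : Fin n → ℝ :=
  fun i => evalMat (p i) M

/-- `vᵀ M v`. -/
def quadForm {n : ℕ} (M : Matrix (Fin n) (Fin n) ℝ) (v : Fin n → ℝ) : ℝ :=
  dotProduct v (M.mulVec v)

end

section AuxLemmas

lemma exists_edge_step {n : ℕ} (α : Edge n →₀ ℕ) (u v : Fin n)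
    (hr : (graphOf α).Reachable u v) (hne : v ≠ u) :
    ∃ e : Edge n, α e ≠ 0 ∧
      ((e.val.1 = v ∧ (graphOf α).dist u e.val.2 + 1 = (graphOf α).dist u v) ∨
       (e.val.2 = v ∧ (graphOf α).dist u e.val.1 + 1 = (graphOf α).dist u v)) := by
  set G := graphOf α with hG
  obtain ⟨q, hq⟩ := hr.symm.exists_walk_length_eq_dist
  have hdpos : 0 < G.dist u v := hr.pos_dist_of_ne (Ne.symm hne)
  cases q with
  | nil => exact absurd rfl hne
  | @cons v w u hadj q' =>
    have hq' : q'.length + 1 = G.dist v u := by simpa using hq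
    have h1 : G.dist u w ≤ q'.length := by
      rw [SimpleGraph.dist_comm]
      exact SimpleGraph.dist_le q'
    have h2 : G.dist u v ≤ G.dist u w + 1 := by
      obtain ⟨r, hrlen⟩ := (hr.trans hadj.reachable).exists_walk_length_eq_dist
      have := SimpleGraph.dist_le (r.concat hadj.symm)
      rwa [SimpleGraph.Walk.length_concat, hrlen] at this
    have hdw : G.dist u w + 1 = G.dist u v := by
      have h3 : G.dist v u = G.dist u v := SimpleGraph.dist_comm ..
      omega
    rcases hadj with ⟨hlt, hα⟩ | ⟨hlt, hα⟩
    · exact ⟨⟨(v, w), hlt⟩, hα, Or.inl ⟨rfl, hdw⟩⟩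
    · exact ⟨⟨(w, v), hlt⟩, hα, Or.inr ⟨rfl, hdw⟩⟩

lemma card_le_of_connectedExp {n : ℕ} (α : Edge n →₀ ℕ) (hconn : ConnectedExp α)
    (s : Finset (Fin n)) (hs : (s : Set (Fin n)) ⊆ vertexSet α) :
    s.card ≤ expDeg α + 1 := by
  classical
  rcases s.eq_empty_or_nonempty with rfl | ⟨u, hu⟩
  · simp
  obtain ⟨e0, he0, -⟩ := hs hu
  haveI : Nonempty (Edge n) := ⟨e0⟩
  have hsupp : α.support.card ≤ expDeg α := by
    have h : α.support.card = ∑ e ∈ α.support, 1 := by simp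
    rw [expDeg, Finsupp.sum, h]
    exact Finset.sum_le_sum fun e he => Nat.one_le_iff_ne_zero.mpr (Finsupp.mem_support_iff.mp he)
  have key : ∀ v ∈ s.erase u, ∃ e : Edge n, α e ≠ 0 ∧
      ((e.val.1 = v ∧ (graphOf α).dist u e.val.2 + 1 = (graphOf α).dist u v) ∨
       (e.val.2 = v ∧ (graphOf α).dist u e.val.1 + 1 = (graphOf α).dist u v)) := by
    intro v hv
    exact exists_edge_step α u v
      (hconn u (hs hu) v (hs (Finset.mem_of_mem_erase hv)))
      (Finset.ne_of_mem_erase hv)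
  choose! f hf1 hf2 using key
  have hinj : (s.erase u).card ≤ α.support.card := by
    apply Finset.card_le_card_of_injOn f
      (fun v hv => Finsupp.mem_support_iff.mpr (hf1 v hv))
    intro v hv v' hv' heq
    simp only [Finset.mem_coe] at hv hv'
    have h2 := hf2 v hv
    have h2' := hf2 v' hv'
    rw [heq] at h2
    rcases h2 with ⟨ha, hb⟩ | ⟨ha, hb⟩ <;> rcases h2' with ⟨ha', hb'⟩ | ⟨ha', hb'⟩
    · rw [← ha]; exact ha'
    · exfalso; rw [ha'] at hb; rw [ha] at hb'; omega
    · exfalso; rw [ha'] at hb; rw [ha] at hb'; omega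
    · rw [← ha]; exact ha'
  have hcer : (s.erase u).card = s.card - 1 := Finset.card_erase_of_mem hu
  have : 0 < s.card := Finset.card_pos.mpr ⟨u, hu⟩
  omega

lemma bddAbove_abs_coeff {n : ℕ} (p : LDP n) :
    BddAbove (Set.range fun α : Edge n →₀ ℕ => |MvPolynomial.coeff α p|) := by
  classical
  apply Set.Finite.bddAbove
  apply Set.Finite.subset
    (Set.Finite.insert (0:ℝ) (Finset.finite_toSet
      (p.support.image fun α => |MvPolynomial.coeff α p|)))
  rintro x ⟨α, rfl⟩
  by_cases h : α ∈ p.support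
  · exact Set.mem_insert_of_mem _
      (Finset.mem_coe.mpr (Finset.mem_image_of_mem _ h))
  · have : MvPolynomial.coeff α p = 0 := MvPolynomial.notMem_support_iff.mp h
    simp [this]

lemma abs_coeff_le_LDPnorm {n : ℕ} (p : LDP n) (α : Edge n →₀ ℕ) :
    |MvPolynomial.coeff α p| ≤ LDPnorm p :=
  le_ciSup (bddAbove_abs_coeff p) α

lemma LDPnorm_nonneg {n : ℕ} (p : LDP n) : 0 ≤ LDPnorm p :=
  le_trans (abs_nonneg _) (abs_coeff_le_LDPnorm p 0)

end AuxLemmas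

/-- Norm bound for a sum of connected LDPs whose marked vertex sets expand. -/
theorem stmt_9 (n m : ℕ) (hm : 0 < m) (p : Fin m → LDP n) (Δ : Fin m → ℕ)
    (hconn : ∀ i, ConnectedLDP (p i))
    (hconst : ∀ i, MvPolynomial.coeff 0 (p i) = 0)
    (hdeg : ∀ i, (p i).totalDegree ≤ Δ i)
    (S : Fin m → Finset (Fin n)) (c γ : ℝ) (hc : 0 < c) (hγ : 0 < γ)
    (hS : ∀ i, ContainsSet (S i) (p i))
    (hunion : ∀ I : Finset (Fin m), I.Nonempty →
      c * (I.card : ℝ) ^ γ ≤ ((I.biUnion S).card : ℝ)) :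
    LDPnorm (∑ i, p i) ≤
      ((1 + (Finset.univ.sup Δ : ℕ)) / c) ^ (1 / γ) * ⨆ i, LDPnorm (p i) := by
  classical
  haveI : Nonempty (Fin m) := ⟨⟨0, hm⟩⟩
  set Dsup : ℕ := Finset.univ.sup Δ with hDsup
  set B : ℝ := ((1 + (Dsup : ℝ)) / c) ^ (1 / γ) with hB
  set Msup : ℝ := ⨆ i, LDPnorm (p i) with hMsup
  have hBnn : 0 ≤ B := Real.rpow_nonneg (by positivity) _
  have hMle : ∀ i, LDPnorm (p i) ≤ Msup := by
    intro i
    rw [hMsup]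
    exact le_ciSup (Set.Finite.bddAbove (Set.finite_range fun j => LDPnorm (p j))) i
  have hMnn : 0 ≤ Msup := le_trans (LDPnorm_nonneg (p (Classical.arbitrary _))) (hMle _)
  rw [LDPnorm]
  apply ciSup_le
  intro α
  set I : Finset (Fin m) := Finset.univ.filter fun i => MvPolynomial.coeff α (p i) ≠ 0 with hI
  have hsum : MvPolynomial.coeff α (∑ i, p i) = ∑ i ∈ I, MvPolynomial.coeff α (p i) := by
    rw [MvPolynomial.coeff_sum]
    exact (Finset.sum_filter_ne_zero _).symm
  rcases I.eq_empty_or_nonempty with hIe | hIne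
  · rw [hsum, hIe]
    simpa using mul_nonneg hBnn hMnn
  · obtain ⟨i₀, hi₀⟩ := hIne
    have hc₀ : MvPolynomial.coeff α (p i₀) ≠ 0 := (Finset.mem_filter.mp hi₀).2
    have hα0 : α ≠ 0 := fun h => hc₀ (h ▸ hconst i₀)
    -- card bound
    have hbi : ((I.biUnion S : Finset (Fin n)) : Set (Fin n)) ⊆ vertexSet α := by
      intro x hx
      simp only [Finset.coe_biUnion, Set.mem_iUnion] at hx
      obtain ⟨i, hi, hxS⟩ := hx
      have hci : MvPolynomial.coeff α (p i) ≠ 0 := (Finset.mem_filter.mp hi).2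
      rcases hS i α hci with h | h
      · exact absurd h hα0
      · exact h hxS
    have hVcard : (I.biUnion S).card ≤ expDeg α + 1 :=
      card_le_of_connectedExp α (hconn i₀ α hc₀) _ hbi
    have hdegα : expDeg α ≤ Dsup :=
      le_trans (le_trans (MvPolynomial.le_totalDegree
        (MvPolynomial.mem_support_iff.mpr hc₀)) (hdeg i₀)) (Finset.le_sup (Finset.mem_univ i₀))
    have hchain : c * (I.card : ℝ) ^ γ ≤ 1 + (Dsup : ℝ) := by
      have h1 := hunion I ⟨i₀, hi₀⟩
      have h2 : ((I.biUnion S).card : ℝ) ≤ 1 + (Dsup : ℝ) := by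
        have : (I.biUnion S).card ≤ Dsup + 1 := le_trans hVcard (by omega)
        calc ((I.biUnion S).card : ℝ) ≤ ((Dsup : ℕ) : ℝ) + 1 := by exact_mod_cast this
          _ = 1 + (Dsup : ℝ) := by ring
      linarith
    have hcardB : (I.card : ℝ) ≤ B := by
      have hx : (0 : ℝ) ≤ (I.card : ℝ) := Nat.cast_nonneg _
      have hstep : (I.card : ℝ) ^ γ ≤ (1 + (Dsup : ℝ)) / c := by
        rw [le_div_iff₀ hc, mul_comm]
        exact hchain
      have := Real.rpow_le_rpow (Real.rpow_nonneg hx γ) hstep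
        (le_of_lt (by positivity : (0:ℝ) < 1 / γ))
      rwa [← Real.rpow_mul hx, mul_one_div, div_self hγ.ne', Real.rpow_one] at this
    calc |MvPolynomial.coeff α (∑ i, p i)| ≤ ∑ i ∈ I, |MvPolynomial.coeff α (p i)| := by
          rw [hsum]; exact Finset.abs_sum_le_sum_abs _ _
      _ ≤ ∑ _i ∈ I, Msup :=
          Finset.sum_le_sum fun i _ => le_trans (abs_coeff_le_LDPnorm _ _) (hMle i)
      _ = (I.card : ℝ) * Msup := by rw [Finset.sum_const, nsmul_eq_mul]
      _ ≤ B * Msup := mul_le_mul_of_nonneg_right hcardB hMnn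
end

section
/- Let p and q be LDPs in dimension n. If p is connected and p^Tr = 0, then (pq)^Tr = 0. -/
open MeasureTheory ProbabilityTheory Filter
open scoped ENNReal NNReal

lemma graphOf_mono {n : ℕ} {β α : Edge n →₀ ℕ} (h : ∀ e, β e ≤ α e) :
    graphOf β ≤ graphOf α := by
  intro i j hij
  rcases hij with ⟨hlt, hne⟩ | ⟨hlt, hne⟩
  · exact Or.inl ⟨hlt, fun h0 => hne (Nat.le_antisymm (h0 ▸ h _) (Nat.zero_le _))⟩
  · exact Or.inr ⟨hlt, fun h0 => hne (Nat.le_antisymm (h0 ▸ h _) (Nat.zero_le _))⟩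

lemma coeff_treeProj {n : ℕ} (p : LDP n) (β : Edge n →₀ ℕ) (hβ : IsTree2 β) :
    MvPolynomial.coeff β (treeProj p) = MvPolynomial.coeff β p := by
  classical
  unfold treeProj
  rw [MvPolynomial.coeff_sum]
  rw [Finset.sum_eq_single β]
  · simp [hβ]
  · intro b _ hb
    split
    · rw [MvPolynomial.coeff_monomial, if_neg hb]
    · simp
  · intro h
    simp [hβ, MvPolynomial.coeff_monomial, MvPolynomial.notMem_support_iff.mp h]

/-- If `p` is connected and its tree projection vanishes, then the tree projection
of `pq` vanishes. -/
theorem stmt_10 (n : ℕ) (p q : LDP n) (hp : ConnectedLDP p)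
    (hTr : treeProj p = 0) : treeProj (p * q) = 0 := by

  classical
  have hkey : ∀ β : Edge n →₀ ℕ, IsTree2 β → MvPolynomial.coeff β p = 0 := by
    intro β hβ
    have := coeff_treeProj p β hβ
    rw [hTr] at this
    simpa using this.symm
  -- every Tree2 coefficient of p*q vanishes
  have hpq : ∀ α : Edge n →₀ ℕ, IsTree2 α → MvPolynomial.coeff α (p * q) = 0 := by
    intro α hα
    rw [MvPolynomial.coeff_mul]
    apply Finset.sum_eq_zero
    rintro ⟨β, γ⟩ hmem
    have hβγ : β + γ = α := Finset.HasAntidiagonal.mem_antidiagonal.mp hmem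
    by_cases hβ : MvPolynomial.coeff β p = 0
    · simp [hβ]
    have hle : ∀ e, β e ≤ α e := by
      intro e
      rw [← hβγ]
      simp
    have hmono := graphOf_mono hle
    have hβtree : IsTree2 β := by
      refine ⟨⟨hp β hβ, ?_⟩, fun e => le_trans (hle e) (hα.2 e)⟩
      intro v c hc
      exact hα.1.2 (c.mapLe hmono) (hc.mapLe hmono)
    exact absurd (hkey β hβtree) hβ
  unfold treeProj
  apply Finset.sum_eq_zero
  intro α hα
  split
  · next h =>
    rw [hpq α h]
    simp
  · rfl
end

section
/- Let β ≥ 1 and u, a, b ∈ ℝ; set v(z) = u + z a + z² b and k(z) = π_β(v(z))². Then there exists a universal constant c such that for every j ∈ {1,2,3,4} and all z, z* ∈ ℝ with |z*| ≤ |z|: |k^{(j)}(z*)| ≤ c β³ Σ |z|^{j₁} |a|^{j₂} |b|^{j₃} |u|^{j₄}, where the sum ranges over all tuples (j₁, j₂, j₃, j₄) of nonnegative integers with each jₛ ≤ 4 + j and j₂ + j₃ ≥ ⌈j/2⌉. -/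
set_option maxHeartbeats 2000000

open Real

lemma one_add_exp_pos (x : ℝ) : 0 < 1 + Real.exp x := by positivity

lemma logistic_nonneg (x : ℝ) : 0 ≤ logistic x := by
  unfold logistic; positivity

lemma logistic_le_one (x : ℝ) : logistic x ≤ 1 := by
  unfold logistic
  rw [div_le_one (one_add_exp_pos x)]
  linarith

lemma hasDerivAt_log1exp (x : ℝ) :
    HasDerivAt (fun x => Real.log (1 + Real.exp x)) (logistic x) x := by
  have h1 : HasDerivAt (fun x : ℝ => 1 + Real.exp x) (Real.exp x) x :=
    (Real.hasDerivAt_exp x).const_add 1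
  simpa [logistic] using h1.log (ne_of_gt (one_add_exp_pos x))

lemma hasDerivAt_logistic (x : ℝ) :
    HasDerivAt logistic (logistic x * (1 - logistic x)) x := by
  have h1 : HasDerivAt (fun x : ℝ => 1 + Real.exp x) (Real.exp x) x :=
    (Real.hasDerivAt_exp x).const_add 1
  have h2 := (Real.hasDerivAt_exp x).div h1 (ne_of_gt (one_add_exp_pos x))
  refine h2.congr_deriv ?_
  unfold logistic
  field_simp

noncomputable def q2 (x : ℝ) : ℝ := logistic x * (1 - logistic x)
noncomputable def q3 (x : ℝ) : ℝ := q2 x * (1 - 2 * logistic x)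
noncomputable def q4 (x : ℝ) : ℝ := q3 x * (1 - 2 * logistic x) - 2 * q2 x ^ 2

lemma hasDerivAt_q2 (x : ℝ) : HasDerivAt q2 (q3 x) x := by
  have h := (hasDerivAt_logistic x).mul ((hasDerivAt_logistic x).const_sub 1)
  refine h.congr_deriv ?_
  unfold q3 q2
  ring

lemma hasDerivAt_q3 (x : ℝ) : HasDerivAt q3 (q4 x) x := by
  have h := (hasDerivAt_q2 x).mul (((hasDerivAt_logistic x).const_mul 2).const_sub 1)
  refine h.congr_deriv ?_
  unfold q4 q2 q3
  ring

lemma abs_one_sub_two_logistic (x : ℝ) : |1 - 2 * logistic x| ≤ 1 := by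
  have h1 := logistic_nonneg x; have h2 := logistic_le_one x
  rw [abs_le]; constructor <;> linarith

lemma abs_q2_le (x : ℝ) : |q2 x| ≤ 1 := by
  have h1 := logistic_nonneg x; have h2 := logistic_le_one x
  rw [abs_le]; unfold q2; constructor <;> nlinarith

lemma abs_q3_le (x : ℝ) : |q3 x| ≤ 1 := by
  have h := abs_q2_le x
  have h2 := abs_one_sub_two_logistic x
  calc |q3 x| = |q2 x| * |1 - 2 * logistic x| := by rw [q3, abs_mul]
    _ ≤ 1 * 1 := by
        apply mul_le_mul h h2 (abs_nonneg _) zero_le_one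
    _ = 1 := by norm_num

lemma abs_q4_le (x : ℝ) : |q4 x| ≤ 3 := by
  have h3 := abs_q3_le x
  have h2 := abs_one_sub_two_logistic x
  have hq2 := abs_q2_le x
  have hA : |q3 x * (1 - 2 * logistic x)| ≤ 1 := by
    rw [abs_mul]
    calc |q3 x| * |1 - 2 * logistic x| ≤ 1 * 1 :=
          mul_le_mul h3 h2 (abs_nonneg _) zero_le_one
      _ = 1 := by norm_num
  have hB : |2 * q2 x ^ 2| ≤ 2 := by
    rw [abs_mul, abs_pow]
    have : |q2 x| ^ 2 ≤ 1 := by nlinarith [abs_nonneg (q2 x)]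
    rw [abs_two]
    nlinarith
  calc |q4 x| ≤ |q3 x * (1 - 2 * logistic x)| + |2 * q2 x ^ 2| := abs_sub _ _
    _ ≤ 3 := by linarith

lemma log1exp_nonneg (x : ℝ) : 0 ≤ Real.log (1 + Real.exp x) := by
  have := Real.exp_pos x
  have : (1:ℝ) ≤ 1 + Real.exp x := by linarith
  exact Real.log_nonneg this

lemma log1exp_le (x : ℝ) : Real.log (1 + Real.exp x) ≤ 1 + |x| := by
  rw [Real.log_le_iff_le_exp (one_add_exp_pos x)]
  have h1 : Real.exp x ≤ Real.exp |x| := Real.exp_le_exp.2 (le_abs_self x)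
  have h2 : (1:ℝ) ≤ Real.exp |x| := Real.one_le_exp (abs_nonneg x)
  have h3 : Real.exp (1 + |x|) = Real.exp 1 * Real.exp |x| := by rw [Real.exp_add]
  have h4 : (2:ℝ) ≤ Real.exp 1 := by
    have := Real.add_one_le_exp (1:ℝ); linarith
  nlinarith [Real.exp_pos |x|]


noncomputable def P1 (β z : ℝ) : ℝ := logistic (β * (z - 1)) - logistic (β * (-z - 1))
noncomputable def P2 (β z : ℝ) : ℝ := β * (q2 (β * (z - 1)) + q2 (β * (-z - 1)))
noncomputable def P3 (β z : ℝ) : ℝ := β ^ 2 * (q3 (β * (z - 1)) - q3 (β * (-z - 1)))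
noncomputable def P4 (β z : ℝ) : ℝ := β ^ 3 * (q4 (β * (z - 1)) + q4 (β * (-z - 1)))

lemma hasDerivAt_arg1 (β z : ℝ) : HasDerivAt (fun z : ℝ => β * (z - 1)) β z := by
  simpa using ((hasDerivAt_id z).sub_const 1).const_mul β

lemma hasDerivAt_arg2 (β z : ℝ) : HasDerivAt (fun z : ℝ => β * (-z - 1)) (-β) z := by
  have := (((hasDerivAt_id z).neg).sub_const 1).const_mul β
  simpa using this

lemma hasDerivAt_pia (β : ℝ) (hβ : β ≠ 0) (z : ℝ) :
    HasDerivAt (pia β) (P1 β z) z := by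
  have h1 := (hasDerivAt_log1exp (β * (z - 1))).comp z (hasDerivAt_arg1 β z)
  have h2 := (hasDerivAt_log1exp (β * (-z - 1))).comp z (hasDerivAt_arg2 β z)
  have h := (h1.add h2).div_const β
  have : HasDerivAt (pia β)
      ((logistic (β * (z - 1)) * β + logistic (β * (-z - 1)) * (-β)) / β) z := by
    exact h
  convert this using 1
  unfold P1
  field_simp
  ring

lemma hasDerivAt_P1 (β z : ℝ) : HasDerivAt (P1 β) (P2 β z) z := by
  have h1 := (hasDerivAt_q2 (β * (z - 1))).comp z (hasDerivAt_arg1 β z)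
  have h2 := (hasDerivAt_q2 (β * (-z - 1))).comp z (hasDerivAt_arg2 β z)
  have hl1 := (hasDerivAt_logistic (β * (z - 1))).comp z (hasDerivAt_arg1 β z)
  have hl2 := (hasDerivAt_logistic (β * (-z - 1))).comp z (hasDerivAt_arg2 β z)
  have h := hl1.sub hl2
  refine h.congr_deriv ?_
  unfold P2 q2
  ring

lemma hasDerivAt_P2 (β z : ℝ) : HasDerivAt (P2 β) (P3 β z) z := by
  have h1 := (hasDerivAt_q2 (β * (z - 1))).comp z (hasDerivAt_arg1 β z)
  have h2 := (hasDerivAt_q2 (β * (-z - 1))).comp z (hasDerivAt_arg2 β z)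
  have h := (h1.add h2).const_mul β
  refine h.congr_deriv ?_
  unfold P3
  ring

lemma hasDerivAt_P3 (β z : ℝ) : HasDerivAt (P3 β) (P4 β z) z := by
  have h1 := (hasDerivAt_q3 (β * (z - 1))).comp z (hasDerivAt_arg1 β z)
  have h2 := (hasDerivAt_q3 (β * (-z - 1))).comp z (hasDerivAt_arg2 β z)
  have h := (h1.sub h2).const_mul (β ^ 2)
  refine h.congr_deriv ?_
  unfold P4
  ring

lemma abs_P1_le (β z : ℝ) : |P1 β z| ≤ 2 := by
  have a1 := logistic_nonneg (β * (z - 1)); have a2 := logistic_le_one (β * (z - 1))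
  have b1 := logistic_nonneg (β * (-z - 1)); have b2 := logistic_le_one (β * (-z - 1))
  rw [P1, abs_le]; constructor <;> linarith

lemma abs_P2_le (β z : ℝ) (hβ : 1 ≤ β) : |P2 β z| ≤ 2 * β := by
  have a1 := abs_q2_le (β * (z - 1)); have a2 := abs_q2_le (β * (-z - 1))
  have hb : (0:ℝ) < β := lt_of_lt_of_le one_pos hβ
  rw [P2, abs_mul, abs_of_pos hb]
  have : |q2 (β * (z - 1)) + q2 (β * (-z - 1))| ≤ 2 := by
    calc |q2 (β * (z - 1)) + q2 (β * (-z - 1))| ≤ _ := abs_add_le _ _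
      _ ≤ 2 := by linarith
  nlinarith

lemma abs_P3_le (β z : ℝ) (hβ : 1 ≤ β) : |P3 β z| ≤ 2 * β ^ 2 := by
  have a1 := abs_q3_le (β * (z - 1)); have a2 := abs_q3_le (β * (-z - 1))
  have hb : (0:ℝ) < β := lt_of_lt_of_le one_pos hβ
  rw [P3, abs_mul, abs_of_pos (by positivity : (0:ℝ) < β ^ 2)]
  have : |q3 (β * (z - 1)) - q3 (β * (-z - 1))| ≤ 2 := by
    calc |q3 (β * (z - 1)) - q3 (β * (-z - 1))| ≤ _ := abs_sub _ _
      _ ≤ 2 := by linarith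
  nlinarith [sq_nonneg β]

lemma abs_P4_le (β z : ℝ) (hβ : 1 ≤ β) : |P4 β z| ≤ 6 * β ^ 3 := by
  have a1 := abs_q4_le (β * (z - 1)); have a2 := abs_q4_le (β * (-z - 1))
  have hb : (0:ℝ) < β := lt_of_lt_of_le one_pos hβ
  rw [P4, abs_mul, abs_of_pos (by positivity : (0:ℝ) < β ^ 3)]
  have h : |q4 (β * (z - 1)) + q4 (β * (-z - 1))| ≤ 6 := by
    calc |q4 (β * (z - 1)) + q4 (β * (-z - 1))| ≤ _ := abs_add_le _ _
      _ ≤ 6 := by linarith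
  nlinarith [pow_pos hb 3]

lemma abs_pia_le (β z : ℝ) (hβ : 1 ≤ β) : |pia β z| ≤ 2 * |z| + 4 := by
  have hb : (0:ℝ) < β := lt_of_lt_of_le one_pos hβ
  have n1 := log1exp_nonneg (β * (z - 1))
  have n2 := log1exp_nonneg (β * (-z - 1))
  have u1 := log1exp_le (β * (z - 1))
  have u2 := log1exp_le (β * (-z - 1))
  have e1 : |β * (z - 1)| = β * |z - 1| := by rw [abs_mul, abs_of_pos hb]
  have e2 : |β * (-z - 1)| = β * |(-z - 1)| := by rw [abs_mul, abs_of_pos hb]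
  have z1 : |z - 1| ≤ |z| + 1 := by
    calc |z - 1| ≤ |z| + |(1:ℝ)| := abs_sub _ _
      _ = |z| + 1 := by norm_num
  have z2 : |(-z - 1)| ≤ |z| + 1 := by
    calc |(-z - 1)| ≤ |(-z)| + |(1:ℝ)| := abs_sub _ _
      _ = |z| + 1 := by rw [abs_neg]; norm_num
  have hpos : 0 ≤ pia β z := by
    rw [pia]; positivity
  rw [abs_of_nonneg hpos, pia, div_le_iff₀ hb]
  rw [e1] at u1; rw [e2] at u2
  nlinarith [abs_nonneg z]


noncomputable def D1 (β w : ℝ) : ℝ := 2 * pia β w * P1 β w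
noncomputable def D2 (β w : ℝ) : ℝ := 2 * P1 β w ^ 2 + 2 * pia β w * P2 β w
noncomputable def D3 (β w : ℝ) : ℝ := 6 * P1 β w * P2 β w + 2 * pia β w * P3 β w
noncomputable def D4 (β w : ℝ) : ℝ :=
  6 * P2 β w ^ 2 + 8 * P1 β w * P3 β w + 2 * pia β w * P4 β w

variable {β : ℝ}

lemma hasDerivAt_D0 (hβ : β ≠ 0) (w : ℝ) :
    HasDerivAt (fun w => pia β w ^ 2) (D1 β w) w := by
  have h := ((hasDerivAt_pia β hβ w).mul (hasDerivAt_pia β hβ w))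
  have h2 : HasDerivAt (fun w => pia β w * pia β w)
      (P1 β w * pia β w + pia β w * P1 β w) w := h
  have : (fun w => pia β w ^ 2) = fun w => pia β w * pia β w := by
    funext t; ring
  rw [this]
  convert h2 using 1
  simp only [D1]; ring

lemma hasDerivAt_D1 (hβ : β ≠ 0) (w : ℝ) : HasDerivAt (D1 β) (D2 β w) w := by
  have h := (((hasDerivAt_pia β hβ w).const_mul 2).mul (hasDerivAt_P1 β w))
  refine h.congr_deriv ?_
  simp only [D1, D2]; ring

lemma hasDerivAt_D2 (hβ : β ≠ 0) (w : ℝ) : HasDerivAt (D2 β) (D3 β w) w := by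
  have hsq : HasDerivAt (fun w => 2 * P1 β w ^ 2) (4 * P1 β w * P2 β w) w := by
    have h := ((hasDerivAt_P1 β w).mul (hasDerivAt_P1 β w)).const_mul 2
    have e : (fun w => 2 * P1 β w ^ 2) = fun w => 2 * (P1 β w * P1 β w) := by
      funext t; ring
    rw [e]; refine h.congr_deriv ?_; ring
  have hp : HasDerivAt (fun w => 2 * pia β w * P2 β w)
      (2 * P1 β w * P2 β w + 2 * pia β w * P3 β w) w := by
    have h := (((hasDerivAt_pia β hβ w).const_mul 2).mul (hasDerivAt_P2 β w))
    refine h.congr_deriv ?_; ring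
  have h := hsq.add hp
  refine h.congr_deriv ?_
  simp only [D2, D3]; ring

lemma hasDerivAt_D3 (hβ : β ≠ 0) (w : ℝ) : HasDerivAt (D3 β) (D4 β w) w := by
  have h1 : HasDerivAt (fun w => 6 * P1 β w * P2 β w)
      (6 * P2 β w ^ 2 + 6 * P1 β w * P3 β w) w := by
    have h := (((hasDerivAt_P1 β w).const_mul 6).mul (hasDerivAt_P2 β w))
    refine h.congr_deriv ?_; ring
  have h2 : HasDerivAt (fun w => 2 * pia β w * P3 β w)
      (2 * P1 β w * P3 β w + 2 * pia β w * P4 β w) w := by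
    have h := (((hasDerivAt_pia β hβ w).const_mul 2).mul (hasDerivAt_P3 β w))
    refine h.congr_deriv ?_; ring
  have h := h1.add h2
  refine h.congr_deriv ?_
  simp only [D3, D4]; ring

lemma abs_D1_le (hβ : 1 ≤ β) (w : ℝ) : |D1 β w| ≤ 104 * (1 + |w|) := by
  have h1 := abs_pia_le β w hβ
  have h2 := abs_P1_le β w
  have : |D1 β w| ≤ 2 * |pia β w| * |P1 β w| := by
    simp only [D1]; rw [abs_mul, abs_mul, abs_two]
  nlinarith [abs_nonneg (pia β w), abs_nonneg (P1 β w), abs_nonneg w]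

lemma abs_D2_le (hβ : 1 ≤ β) (w : ℝ) : |D2 β w| ≤ 104 * β * (1 + |w|) := by
  have h1 := abs_pia_le β w hβ
  have hp1 := abs_P1_le β w
  have hp2 := abs_P2_le β w hβ
  have e1 : |2 * P1 β w ^ 2| ≤ 8 := by
    rw [abs_mul, abs_two, abs_pow]
    nlinarith [abs_nonneg (P1 β w)]
  have e2 : |2 * pia β w * P2 β w| ≤ 2 * (2 * |w| + 4) * (2 * β) := by
    rw [abs_mul, abs_mul, abs_two]
    have := abs_nonneg (pia β w); have := abs_nonneg (P2 β w)
    nlinarith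
  calc |D2 β w| ≤ |2 * P1 β w ^ 2| + |2 * pia β w * P2 β w| := abs_add_le _ _
    _ ≤ 104 * β * (1 + |w|) := by nlinarith [abs_nonneg w]

lemma abs_D3_le (hβ : 1 ≤ β) (w : ℝ) : |D3 β w| ≤ 104 * β ^ 2 * (1 + |w|) := by
  have h1 := abs_pia_le β w hβ
  have hp1 := abs_P1_le β w
  have hp2 := abs_P2_le β w hβ
  have hp3 := abs_P3_le β w hβ
  have hb : (0:ℝ) < β := lt_of_lt_of_le one_pos hβ
  have e1 : |6 * P1 β w * P2 β w| ≤ 24 * β := by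
    rw [abs_mul, abs_mul]
    have := abs_nonneg (P1 β w); have := abs_nonneg (P2 β w)
    have h6 : |(6:ℝ)| = 6 := by norm_num
    rw [h6]; nlinarith
  have e2 : |2 * pia β w * P3 β w| ≤ 2 * (2 * |w| + 4) * (2 * β ^ 2) := by
    rw [abs_mul, abs_mul, abs_two]
    have := abs_nonneg (pia β w); have := abs_nonneg (P3 β w)
    nlinarith
  calc |D3 β w| ≤ |6 * P1 β w * P2 β w| + |2 * pia β w * P3 β w| := abs_add_le _ _
    _ ≤ 104 * β ^ 2 * (1 + |w|) := by nlinarith [abs_nonneg w, sq_nonneg β]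

lemma abs_D4_le (hβ : 1 ≤ β) (w : ℝ) : |D4 β w| ≤ 104 * β ^ 3 * (1 + |w|) := by
  have h1 := abs_pia_le β w hβ
  have hp1 := abs_P1_le β w
  have hp2 := abs_P2_le β w hβ
  have hp3 := abs_P3_le β w hβ
  have hp4 := abs_P4_le β w hβ
  have hb : (0:ℝ) < β := lt_of_lt_of_le one_pos hβ
  have e1 : |6 * P2 β w ^ 2| ≤ 24 * β ^ 2 := by
    rw [abs_mul, abs_pow]
    have := abs_nonneg (P2 β w)
    have h6 : |(6:ℝ)| = 6 := by norm_num
    rw [h6]; nlinarith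
  have e2 : |8 * P1 β w * P3 β w| ≤ 32 * β ^ 2 := by
    rw [abs_mul, abs_mul]
    have := abs_nonneg (P1 β w); have := abs_nonneg (P3 β w)
    have h8 : |(8:ℝ)| = 8 := by norm_num
    rw [h8]; nlinarith
  have e3 : |2 * pia β w * P4 β w| ≤ 2 * (2 * |w| + 4) * (6 * β ^ 3) := by
    rw [abs_mul, abs_mul, abs_two]
    have := abs_nonneg (pia β w); have := abs_nonneg (P4 β w)
    nlinarith
  have hb2 : β ^ 2 ≤ β ^ 3 := by nlinarith
  calc |D4 β w| ≤ |6 * P2 β w ^ 2 + 8 * P1 β w * P3 β w| + |2 * pia β w * P4 β w| :=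
        abs_add_le _ _
    _ ≤ |6 * P2 β w ^ 2| + |8 * P1 β w * P3 β w| + |2 * pia β w * P4 β w| := by
        have := abs_add_le (6 * P2 β w ^ 2) (8 * P1 β w * P3 β w); linarith
    _ ≤ 104 * β ^ 3 * (1 + |w|) := by nlinarith [abs_nonneg w, pow_pos hb 3]


section comp
variable (β u a b : ℝ)

noncomputable def VV (t : ℝ) : ℝ := u + t * a + t ^ 2 * b
noncomputable def W1 (t : ℝ) : ℝ := a + 2 * t * b

noncomputable def g0 (t : ℝ) : ℝ := pia β (VV u a b t) ^ 2
noncomputable def g1 (t : ℝ) : ℝ := D1 β (VV u a b t) * W1 a b t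
noncomputable def g2 (t : ℝ) : ℝ :=
  D2 β (VV u a b t) * W1 a b t ^ 2 + D1 β (VV u a b t) * (2 * b)
noncomputable def g3 (t : ℝ) : ℝ :=
  D3 β (VV u a b t) * W1 a b t ^ 3 + 6 * b * D2 β (VV u a b t) * W1 a b t
noncomputable def g4 (t : ℝ) : ℝ :=
  D4 β (VV u a b t) * W1 a b t ^ 4 + 12 * b * D3 β (VV u a b t) * W1 a b t ^ 2 +
    12 * b ^ 2 * D2 β (VV u a b t)

lemma hasDerivAt_VV (t : ℝ) : HasDerivAt (VV u a b) (W1 a b t) t := by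
  have ha : HasDerivAt (fun t : ℝ => t * a) a t := by
    simpa using (hasDerivAt_id t).mul_const a
  have hb : HasDerivAt (fun t : ℝ => t ^ 2 * b) (2 * t * b) t := by
    have := (hasDerivAt_pow 2 t).mul_const b
    simpa [mul_comm] using this
  have h := (ha.const_add u).add hb
  exact h

lemma hasDerivAt_W1 (t : ℝ) : HasDerivAt (W1 a b) (2 * b) t := by
  have h0 := ((hasDerivAt_id t).const_mul 2).mul_const b
  have h : HasDerivAt (fun x : ℝ => a + 2 * x * b) (2 * b) t := by
    simpa [mul_assoc] using h0.const_add a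
  exact h

variable {β}

lemma hasDerivAt_g0 (hβ : β ≠ 0) (t : ℝ) :
    HasDerivAt (g0 β u a b) (g1 β u a b t) t :=
  (hasDerivAt_D0 hβ (VV u a b t)).comp t (hasDerivAt_VV u a b t)

lemma hasDerivAt_g1 (hβ : β ≠ 0) (t : ℝ) :
    HasDerivAt (g1 β u a b) (g2 β u a b t) t := by
  have hD := (hasDerivAt_D1 hβ (VV u a b t)).comp t (hasDerivAt_VV u a b t)
  have h := hD.mul (hasDerivAt_W1 a b t)
  simp only [Function.comp] at h
  refine h.congr_deriv ?_
  simp only [g2]; ring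

lemma hasDerivAt_g2 (hβ : β ≠ 0) (t : ℝ) :
    HasDerivAt (g2 β u a b) (g3 β u a b t) t := by
  have hD2 := (hasDerivAt_D2 hβ (VV u a b t)).comp t (hasDerivAt_VV u a b t)
  have hD1 := (hasDerivAt_D1 hβ (VV u a b t)).comp t (hasDerivAt_VV u a b t)
  have hW2 := (hasDerivAt_W1 a b t).pow 2
  have h := (hD2.mul hW2).add (hD1.mul_const (2 * b))
  simp only [Function.comp] at h
  refine h.congr_deriv ?_
  simp only [g3, Pi.pow_apply]; push_cast; ring

lemma hasDerivAt_g3 (hβ : β ≠ 0) (t : ℝ) :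
    HasDerivAt (g3 β u a b) (g4 β u a b t) t := by
  have hD3 := (hasDerivAt_D3 hβ (VV u a b t)).comp t (hasDerivAt_VV u a b t)
  have hD2 := (hasDerivAt_D2 hβ (VV u a b t)).comp t (hasDerivAt_VV u a b t)
  have hW3 := (hasDerivAt_W1 a b t).pow 3
  have h := (hD3.mul hW3).add
    (((hD2.const_mul (6 * b)).mul (hasDerivAt_W1 a b t)))
  simp only [Function.comp] at h
  refine h.congr_deriv ?_
  simp only [g4, Pi.pow_apply]; push_cast; ring

lemma iter_g (hβ : β ≠ 0) :
    iteratedDeriv 1 (g0 β u a b) = g1 β u a b ∧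
    iteratedDeriv 2 (g0 β u a b) = g2 β u a b ∧
    iteratedDeriv 3 (g0 β u a b) = g3 β u a b ∧
    iteratedDeriv 4 (g0 β u a b) = g4 β u a b := by
  have h1 : iteratedDeriv 1 (g0 β u a b) = g1 β u a b := by
    rw [iteratedDeriv_one]
    funext t; exact (hasDerivAt_g0 u a b hβ t).deriv
  have h2 : iteratedDeriv 2 (g0 β u a b) = g2 β u a b := by
    rw [iteratedDeriv_succ, h1]
    funext t; exact (hasDerivAt_g1 u a b hβ t).deriv
  have h3 : iteratedDeriv 3 (g0 β u a b) = g3 β u a b := by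
    rw [iteratedDeriv_succ, h2]
    funext t; exact (hasDerivAt_g2 u a b hβ t).deriv
  have h4 : iteratedDeriv 4 (g0 β u a b) = g4 β u a b := by
    rw [iteratedDeriv_succ, h3]
    funext t; exact (hasDerivAt_g3 u a b hβ t).deriv
  exact ⟨h1, h2, h3, h4⟩

end comp


section combi

lemma mono_le_S (M A B U : ℝ) (hM : 0 ≤ M) (hA : 0 ≤ A) (hB : 0 ≤ B) (hU : 0 ≤ U)
    (j e1 e2 e3 e4 : ℕ) (h1 : e1 < 4 + j + 1) (h2 : e2 < 4 + j + 1)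
    (h3 : e3 < 4 + j + 1) (h4 : e4 < 4 + j + 1) (hc : (j + 1) / 2 ≤ e2 + e3) :
    M ^ e1 * A ^ e2 * B ^ e3 * U ^ e4 ≤
      ∑ j1 ∈ Finset.range (4 + j + 1), ∑ j2 ∈ Finset.range (4 + j + 1),
        ∑ j3 ∈ Finset.range (4 + j + 1), ∑ j4 ∈ Finset.range (4 + j + 1),
          if (j + 1) / 2 ≤ j2 + j3 then M ^ j1 * A ^ j2 * B ^ j3 * U ^ j4 else 0 := by
  set F : ℕ → ℕ → ℕ → ℕ → ℝ := fun j1 j2 j3 j4 =>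
    if (j + 1) / 2 ≤ j2 + j3 then M ^ j1 * A ^ j2 * B ^ j3 * U ^ j4 else 0 with hF
  have hnn : ∀ j1 j2 j3 j4, 0 ≤ F j1 j2 j3 j4 := by
    intro j1 j2 j3 j4
    simp only [hF]
    split
    · positivity
    · exact le_refl 0
  have s4 : M ^ e1 * A ^ e2 * B ^ e3 * U ^ e4 ≤
      ∑ j4 ∈ Finset.range (4 + j + 1), F e1 e2 e3 j4 := by
    have : M ^ e1 * A ^ e2 * B ^ e3 * U ^ e4 = F e1 e2 e3 e4 := by
      simp only [hF, if_pos hc]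
    rw [this]
    exact Finset.single_le_sum (fun i _ => hnn e1 e2 e3 i) (Finset.mem_range.2 h4)
  have s3 : ∑ j4 ∈ Finset.range (4 + j + 1), F e1 e2 e3 j4 ≤
      ∑ j3 ∈ Finset.range (4 + j + 1), ∑ j4 ∈ Finset.range (4 + j + 1), F e1 e2 j3 j4 :=
    Finset.single_le_sum
      (fun i _ => Finset.sum_nonneg fun k _ => hnn e1 e2 i k) (Finset.mem_range.2 h3)
  have s2 : ∑ j3 ∈ Finset.range (4 + j + 1), ∑ j4 ∈ Finset.range (4 + j + 1), F e1 e2 j3 j4 ≤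
      ∑ j2 ∈ Finset.range (4 + j + 1), ∑ j3 ∈ Finset.range (4 + j + 1),
        ∑ j4 ∈ Finset.range (4 + j + 1), F e1 j2 j3 j4 :=
    Finset.single_le_sum
      (fun i _ => Finset.sum_nonneg fun k _ => Finset.sum_nonneg fun l _ => hnn e1 i k l)
      (Finset.mem_range.2 h2)
  have s1 : ∑ j2 ∈ Finset.range (4 + j + 1), ∑ j3 ∈ Finset.range (4 + j + 1),
        ∑ j4 ∈ Finset.range (4 + j + 1), F e1 j2 j3 j4 ≤
      ∑ j1 ∈ Finset.range (4 + j + 1), ∑ j2 ∈ Finset.range (4 + j + 1),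
        ∑ j3 ∈ Finset.range (4 + j + 1), ∑ j4 ∈ Finset.range (4 + j + 1), F j1 j2 j3 j4 :=
    Finset.single_le_sum
      (fun i _ => Finset.sum_nonneg fun k _ => Finset.sum_nonneg fun l _ =>
        Finset.sum_nonneg fun m _ => hnn i k l m)
      (Finset.mem_range.2 h1)
  exact le_trans s4 (le_trans s3 (le_trans s2 s1))

lemma S_nonneg (M A B U : ℝ) (hM : 0 ≤ M) (hA : 0 ≤ A) (hB : 0 ≤ B) (hU : 0 ≤ U) (j : ℕ) :
    0 ≤ ∑ j1 ∈ Finset.range (4 + j + 1), ∑ j2 ∈ Finset.range (4 + j + 1),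
        ∑ j3 ∈ Finset.range (4 + j + 1), ∑ j4 ∈ Finset.range (4 + j + 1),
          if (j + 1) / 2 ≤ j2 + j3 then M ^ j1 * A ^ j2 * B ^ j3 * U ^ j4 else 0 := by
  apply Finset.sum_nonneg; intro _ _
  apply Finset.sum_nonneg; intro _ _
  apply Finset.sum_nonneg; intro _ _
  apply Finset.sum_nonneg; intro _ _
  split
  · positivity
  · exact le_refl 0

end combi


lemma poly1_le (M A B U S : ℝ) (hS0 : 0 ≤ S)
    (h : ∀ e1 e2 e3 e4 : ℕ, e1 < 4 + 1 + 1 → e2 < 4 + 1 + 1 → e3 < 4 + 1 + 1 →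
      e4 < 4 + 1 + 1 → (1 + 1) / 2 ≤ e2 + e3 → M ^ e1 * A ^ e2 * B ^ e3 * U ^ e4 ≤ S) :
    (1 + U + M * A + M ^ 2 * B) * (A + 2 * M * B) ≤ 1000 * S := by
  have t0 := h 0 1 0 0 (by norm_num) (by norm_num) (by norm_num) (by norm_num) (by norm_num)
  have t1 := h 0 1 0 1 (by norm_num) (by norm_num) (by norm_num) (by norm_num) (by norm_num)
  have t2 := h 1 0 1 0 (by norm_num) (by norm_num) (by norm_num) (by norm_num) (by norm_num)
  have t3 := h 1 0 1 1 (by norm_num) (by norm_num) (by norm_num) (by norm_num) (by norm_num)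
  have t4 := h 1 2 0 0 (by norm_num) (by norm_num) (by norm_num) (by norm_num) (by norm_num)
  have t5 := h 2 1 1 0 (by norm_num) (by norm_num) (by norm_num) (by norm_num) (by norm_num)
  have t6 := h 3 0 2 0 (by norm_num) (by norm_num) (by norm_num) (by norm_num) (by norm_num)
  have hid : (1 + U + M * A + M ^ 2 * B) * (A + 2 * M * B) = 1 * (M ^ 0 * A ^ 1 * B ^ 0 * U ^ 0) + 1 * (M ^ 0 * A ^ 1 * B ^ 0 * U ^ 1) + 2 * (M ^ 1 * A ^ 0 * B ^ 1 * U ^ 0) + 2 * (M ^ 1 * A ^ 0 * B ^ 1 * U ^ 1) + 1 * (M ^ 1 * A ^ 2 * B ^ 0 * U ^ 0) + 3 * (M ^ 2 * A ^ 1 * B ^ 1 * U ^ 0) + 2 * (M ^ 3 * A ^ 0 * B ^ 2 * U ^ 0) := by ring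
  rw [hid]
  linarith [t0, t1, t2, t3, t4, t5, t6]

lemma poly2_le (M A B U S : ℝ) (hS0 : 0 ≤ S)
    (h : ∀ e1 e2 e3 e4 : ℕ, e1 < 4 + 2 + 1 → e2 < 4 + 2 + 1 → e3 < 4 + 2 + 1 →
      e4 < 4 + 2 + 1 → (2 + 1) / 2 ≤ e2 + e3 → M ^ e1 * A ^ e2 * B ^ e3 * U ^ e4 ≤ S) :
    (1 + U + M * A + M ^ 2 * B) * (A + 2 * M * B) ^ 2 + 2 * B * (1 + U + M * A + M ^ 2 * B) ≤ 1000 * S := by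
  have t0 := h 0 0 1 0 (by norm_num) (by norm_num) (by norm_num) (by norm_num) (by norm_num)
  have t1 := h 0 0 1 1 (by norm_num) (by norm_num) (by norm_num) (by norm_num) (by norm_num)
  have t2 := h 0 2 0 0 (by norm_num) (by norm_num) (by norm_num) (by norm_num) (by norm_num)
  have t3 := h 0 2 0 1 (by norm_num) (by norm_num) (by norm_num) (by norm_num) (by norm_num)
  have t4 := h 1 1 1 0 (by norm_num) (by norm_num) (by norm_num) (by norm_num) (by norm_num)
  have t5 := h 1 1 1 1 (by norm_num) (by norm_num) (by norm_num) (by norm_num) (by norm_num)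
  have t6 := h 1 3 0 0 (by norm_num) (by norm_num) (by norm_num) (by norm_num) (by norm_num)
  have t7 := h 2 0 2 0 (by norm_num) (by norm_num) (by norm_num) (by norm_num) (by norm_num)
  have t8 := h 2 0 2 1 (by norm_num) (by norm_num) (by norm_num) (by norm_num) (by norm_num)
  have t9 := h 2 2 1 0 (by norm_num) (by norm_num) (by norm_num) (by norm_num) (by norm_num)
  have t10 := h 3 1 2 0 (by norm_num) (by norm_num) (by norm_num) (by norm_num) (by norm_num)
  have t11 := h 4 0 3 0 (by norm_num) (by norm_num) (by norm_num) (by norm_num) (by norm_num)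
  have hid : (1 + U + M * A + M ^ 2 * B) * (A + 2 * M * B) ^ 2 + 2 * B * (1 + U + M * A + M ^ 2 * B) = 2 * (M ^ 0 * A ^ 0 * B ^ 1 * U ^ 0) + 2 * (M ^ 0 * A ^ 0 * B ^ 1 * U ^ 1) + 1 * (M ^ 0 * A ^ 2 * B ^ 0 * U ^ 0) + 1 * (M ^ 0 * A ^ 2 * B ^ 0 * U ^ 1) + 6 * (M ^ 1 * A ^ 1 * B ^ 1 * U ^ 0) + 4 * (M ^ 1 * A ^ 1 * B ^ 1 * U ^ 1) + 1 * (M ^ 1 * A ^ 3 * B ^ 0 * U ^ 0) + 6 * (M ^ 2 * A ^ 0 * B ^ 2 * U ^ 0) + 4 * (M ^ 2 * A ^ 0 * B ^ 2 * U ^ 1) + 5 * (M ^ 2 * A ^ 2 * B ^ 1 * U ^ 0) + 8 * (M ^ 3 * A ^ 1 * B ^ 2 * U ^ 0) + 4 * (M ^ 4 * A ^ 0 * B ^ 3 * U ^ 0) := by ring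
  rw [hid]
  linarith [t0, t1, t2, t3, t4, t5, t6, t7, t8, t9, t10, t11]

lemma poly3_le (M A B U S : ℝ) (hS0 : 0 ≤ S)
    (h : ∀ e1 e2 e3 e4 : ℕ, e1 < 4 + 3 + 1 → e2 < 4 + 3 + 1 → e3 < 4 + 3 + 1 →
      e4 < 4 + 3 + 1 → (3 + 1) / 2 ≤ e2 + e3 → M ^ e1 * A ^ e2 * B ^ e3 * U ^ e4 ≤ S) :
    (1 + U + M * A + M ^ 2 * B) * (A + 2 * M * B) ^ 3 + 6 * B * (1 + U + M * A + M ^ 2 * B) * (A + 2 * M * B) ≤ 1000 * S := by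
  have t0 := h 0 1 1 0 (by norm_num) (by norm_num) (by norm_num) (by norm_num) (by norm_num)
  have t1 := h 0 1 1 1 (by norm_num) (by norm_num) (by norm_num) (by norm_num) (by norm_num)
  have t2 := h 0 3 0 0 (by norm_num) (by norm_num) (by norm_num) (by norm_num) (by norm_num)
  have t3 := h 0 3 0 1 (by norm_num) (by norm_num) (by norm_num) (by norm_num) (by norm_num)
  have t4 := h 1 0 2 0 (by norm_num) (by norm_num) (by norm_num) (by norm_num) (by norm_num)
  have t5 := h 1 0 2 1 (by norm_num) (by norm_num) (by norm_num) (by norm_num) (by norm_num)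
  have t6 := h 1 2 1 0 (by norm_num) (by norm_num) (by norm_num) (by norm_num) (by norm_num)
  have t7 := h 1 2 1 1 (by norm_num) (by norm_num) (by norm_num) (by norm_num) (by norm_num)
  have t8 := h 1 4 0 0 (by norm_num) (by norm_num) (by norm_num) (by norm_num) (by norm_num)
  have t9 := h 2 1 2 0 (by norm_num) (by norm_num) (by norm_num) (by norm_num) (by norm_num)
  have t10 := h 2 1 2 1 (by norm_num) (by norm_num) (by norm_num) (by norm_num) (by norm_num)
  have t11 := h 2 3 1 0 (by norm_num) (by norm_num) (by norm_num) (by norm_num) (by norm_num)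
  have t12 := h 3 0 3 0 (by norm_num) (by norm_num) (by norm_num) (by norm_num) (by norm_num)
  have t13 := h 3 0 3 1 (by norm_num) (by norm_num) (by norm_num) (by norm_num) (by norm_num)
  have t14 := h 3 2 2 0 (by norm_num) (by norm_num) (by norm_num) (by norm_num) (by norm_num)
  have t15 := h 4 1 3 0 (by norm_num) (by norm_num) (by norm_num) (by norm_num) (by norm_num)
  have t16 := h 5 0 4 0 (by norm_num) (by norm_num) (by norm_num) (by norm_num) (by norm_num)
  have hid : (1 + U + M * A + M ^ 2 * B) * (A + 2 * M * B) ^ 3 + 6 * B * (1 + U + M * A + M ^ 2 * B) * (A + 2 * M * B) = 6 * (M ^ 0 * A ^ 1 * B ^ 1 * U ^ 0) + 6 * (M ^ 0 * A ^ 1 * B ^ 1 * U ^ 1) + 1 * (M ^ 0 * A ^ 3 * B ^ 0 * U ^ 0) + 1 * (M ^ 0 * A ^ 3 * B ^ 0 * U ^ 1) + 12 * (M ^ 1 * A ^ 0 * B ^ 2 * U ^ 0) + 12 * (M ^ 1 * A ^ 0 * B ^ 2 * U ^ 1) + 12 * (M ^ 1 * A ^ 2 * B ^ 1 * U ^ 0)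 + 6 * (M ^ 1 * A ^ 2 * B ^ 1 * U ^ 1) + 1 * (M ^ 1 * A ^ 4 * B ^ 0 * U ^ 0) + 30 * (M ^ 2 * A ^ 1 * B ^ 2 * U ^ 0) + 12 * (M ^ 2 * A ^ 1 * B ^ 2 * U ^ 1) + 7 * (M ^ 2 * A ^ 3 * B ^ 1 * U ^ 0) + 20 * (M ^ 3 * A ^ 0 * B ^ 3 * U ^ 0) + 8 * (M ^ 3 * A ^ 0 * B ^ 3 * U ^ 1) + 18 * (M ^ 3 * A ^ 2 * B ^ 2 * U ^ 0) + 20 * (M ^ 4 * A ^ 1 * B ^ 3 * U ^ 0) + 8 * (M ^ 5 * A ^ 0 * B ^ 4 * U ^ 0) := by ring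
  rw [hid]
  linarith [t0, t1, t2, t3, t4, t5, t6, t7, t8, t9, t10, t11, t12, t13, t14, t15, t16]

lemma poly4_le (M A B U S : ℝ) (hS0 : 0 ≤ S)
    (h : ∀ e1 e2 e3 e4 : ℕ, e1 < 4 + 4 + 1 → e2 < 4 + 4 + 1 → e3 < 4 + 4 + 1 →
      e4 < 4 + 4 + 1 → (4 + 1) / 2 ≤ e2 + e3 → M ^ e1 * A ^ e2 * B ^ e3 * U ^ e4 ≤ S) :
    (1 + U + M * A + M ^ 2 * B) * (A + 2 * M * B) ^ 4 + 12 * B * (1 + U + M * A + M ^ 2 * B) * (A + 2 * M * B) ^ 2 + 12 * B ^ 2 * (1 + U + M * A + M ^ 2 * B) ≤ 1000 * S := by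
  have t0 := h 0 0 2 0 (by norm_num) (by norm_num) (by norm_num) (by norm_num) (by norm_num)
  have t1 := h 0 0 2 1 (by norm_num) (by norm_num) (by norm_num) (by norm_num) (by norm_num)
  have t2 := h 0 2 1 0 (by norm_num) (by norm_num) (by norm_num) (by norm_num) (by norm_num)
  have t3 := h 0 2 1 1 (by norm_num) (by norm_num) (by norm_num) (by norm_num) (by norm_num)
  have t4 := h 0 4 0 0 (by norm_num) (by norm_num) (by norm_num) (by norm_num) (by norm_num)
  have t5 := h 0 4 0 1 (by norm_num) (by norm_num) (by norm_num) (by norm_num) (by norm_num)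
  have t6 := h 1 1 2 0 (by norm_num) (by norm_num) (by norm_num) (by norm_num) (by norm_num)
  have t7 := h 1 1 2 1 (by norm_num) (by norm_num) (by norm_num) (by norm_num) (by norm_num)
  have t8 := h 1 3 1 0 (by norm_num) (by norm_num) (by norm_num) (by norm_num) (by norm_num)
  have t9 := h 1 3 1 1 (by norm_num) (by norm_num) (by norm_num) (by norm_num) (by norm_num)
  have t10 := h 1 5 0 0 (by norm_num) (by norm_num) (by norm_num) (by norm_num) (by norm_num)
  have t11 := h 2 0 3 0 (by norm_num) (by norm_num) (by norm_num) (by norm_num) (by norm_num)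
  have t12 := h 2 0 3 1 (by norm_num) (by norm_num) (by norm_num) (by norm_num) (by norm_num)
  have t13 := h 2 2 2 0 (by norm_num) (by norm_num) (by norm_num) (by norm_num) (by norm_num)
  have t14 := h 2 2 2 1 (by norm_num) (by norm_num) (by norm_num) (by norm_num) (by norm_num)
  have t15 := h 2 4 1 0 (by norm_num) (by norm_num) (by norm_num) (by norm_num) (by norm_num)
  have t16 := h 3 1 3 0 (by norm_num) (by norm_num) (by norm_num) (by norm_num) (by norm_num)
  have t17 := h 3 1 3 1 (by norm_num) (by norm_num) (by norm_num) (by norm_num) (by norm_num)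
  have t18 := h 3 3 2 0 (by norm_num) (by norm_num) (by norm_num) (by norm_num) (by norm_num)
  have t19 := h 4 0 4 0 (by norm_num) (by norm_num) (by norm_num) (by norm_num) (by norm_num)
  have t20 := h 4 0 4 1 (by norm_num) (by norm_num) (by norm_num) (by norm_num) (by norm_num)
  have t21 := h 4 2 3 0 (by norm_num) (by norm_num) (by norm_num) (by norm_num) (by norm_num)
  have t22 := h 5 1 4 0 (by norm_num) (by norm_num) (by norm_num) (by norm_num) (by norm_num)
  have t23 := h 6 0 5 0 (by norm_num) (by norm_num) (by norm_num) (by norm_num) (by norm_num)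
  have hid : (1 + U + M * A + M ^ 2 * B) * (A + 2 * M * B) ^ 4 + 12 * B * (1 + U + M * A + M ^ 2 * B) * (A + 2 * M * B) ^ 2 + 12 * B ^ 2 * (1 + U + M * A + M ^ 2 * B) = 12 * (M ^ 0 * A ^ 0 * B ^ 2 * U ^ 0) + 12 * (M ^ 0 * A ^ 0 * B ^ 2 * U ^ 1) + 12 * (M ^ 0 * A ^ 2 * B ^ 1 * U ^ 0) + 12 * (M ^ 0 * A ^ 2 * B ^ 1 * U ^ 1) + 1 * (M ^ 0 * A ^ 4 * B ^ 0 * U ^ 0) + 1 * (M ^ 0 * A ^ 4 * B ^ 0 * U ^ 1) + 60 * (M ^ 1 * A ^ 1 * B ^ 2 * U ^ 0) + 48 * (M ^ 1 * A ^ 1 * B ^ 2 * U ^ 1) + 20 * (M ^ 1 * A ^ 3 * B ^ 1 * U ^ 0) + 8 * (M ^ 1 * A ^ 3 * B ^ 1 * U ^ 1) + 1 * (M ^ 1 * A ^ 5 * B ^ 0 * U ^ 0) + 60 * (M ^ 2 * A ^ 0 * B ^ 3 * U ^ 0) + 48 * (M ^ 2 * A ^ 0 * B ^ 3 * U ^ 1)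 + 84 * (M ^ 2 * A ^ 2 * B ^ 2 * U ^ 0) + 24 * (M ^ 2 * A ^ 2 * B ^ 2 * U ^ 1) + 9 * (M ^ 2 * A ^ 4 * B ^ 1 * U ^ 0) + 128 * (M ^ 3 * A ^ 1 * B ^ 3 * U ^ 0) + 32 * (M ^ 3 * A ^ 1 * B ^ 3 * U ^ 1) + 32 * (M ^ 3 * A ^ 3 * B ^ 2 * U ^ 0) + 64 * (M ^ 4 * A ^ 0 * B ^ 4 * U ^ 0) + 16 * (M ^ 4 * A ^ 0 * B ^ 4 * U ^ 1) + 56 * (M ^ 4 * A ^ 2 * B ^ 3 * U ^ 0) + 48 * (M ^ 5 * A ^ 1 * B ^ 4 * U ^ 0) + 16 * (M ^ 6 * A ^ 0 * B ^ 5 * U ^ 0) := by ring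
  rw [hid]
  linarith [t0, t1, t2, t3, t4, t5, t6, t7, t8, t9, t10, t11, t12, t13, t14, t15, t16, t17, t18, t19, t20, t21, t22, t23]


/-- Derivative bounds for `k(z) = π_β(u + za + z²b)²`. -/
theorem stmt_14 :
    ∃ c : ℝ, ∀ β u a b : ℝ, 1 ≤ β →
      ∀ j ∈ ({1, 2, 3, 4} : Finset ℕ), ∀ z zs : ℝ, |zs| ≤ |z| →
        |iteratedDeriv j (fun t : ℝ => pia β (u + t * a + t ^ 2 * b) ^ 2) zs| ≤
          c * β ^ 3 *
            ∑ j1 ∈ Finset.range (4 + j + 1), ∑ j2 ∈ Finset.range (4 + j + 1),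
              ∑ j3 ∈ Finset.range (4 + j + 1), ∑ j4 ∈ Finset.range (4 + j + 1),
                if (j + 1) / 2 ≤ j2 + j3 then
                  |z| ^ j1 * |a| ^ j2 * |b| ^ j3 * |u| ^ j4
                else 0 := by
  use 104000
  intro β u a b hβ j hj z zs hzs
  have hβ0 : (0:ℝ) < β := lt_of_lt_of_le one_pos hβ
  have hβne : β ≠ 0 := ne_of_gt hβ0
  have hβ3 : (1:ℝ) ≤ β ^ 3 := by
    have h2 : (1:ℝ) ≤ β ^ 2 := by nlinarith
    nlinarith [mul_le_mul hβ h2 zero_le_one hβ0.le]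
  obtain ⟨i1, i2, i3, i4⟩ := iter_g u a b hβne
  have hM : (0:ℝ) ≤ |z| := abs_nonneg z
  have hA : (0:ℝ) ≤ |a| := abs_nonneg a
  have hB : (0:ℝ) ≤ |b| := abs_nonneg b
  have hU : (0:ℝ) ≤ |u| := abs_nonneg u
  have hfg : (fun t : ℝ => pia β (u + t * a + t ^ 2 * b) ^ 2) = g0 β u a b := rfl
  -- bound on the inner argument
  have hV : |VV u a b zs| ≤ |u| + |z| * |a| + |z| ^ 2 * |b| := by
    have h1 : |VV u a b zs| ≤ |u| + |zs * a| + |zs ^ 2 * b| := by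
      simp only [VV]
      calc |u + zs * a + zs ^ 2 * b| ≤ |u + zs * a| + |zs ^ 2 * b| := abs_add_le _ _
        _ ≤ |u| + |zs * a| + |zs ^ 2 * b| := by linarith [abs_add_le u (zs * a)]
    have h2 : |zs * a| = |zs| * |a| := abs_mul _ _
    have h3 : |zs ^ 2 * b| = |zs| ^ 2 * |b| := by rw [abs_mul, abs_pow]
    have h4 : |zs| ^ 2 ≤ |z| ^ 2 := by nlinarith [abs_nonneg zs]
    rw [h2, h3] at h1
    nlinarith [abs_nonneg zs]
  have hW1 : |W1 a b zs| ≤ |a| + 2 * |z| * |b| := by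
    simp only [W1]
    calc |a + 2 * zs * b| ≤ |a| + |2 * zs * b| := abs_add_le _ _
      _ = |a| + 2 * |zs| * |b| := by rw [abs_mul, abs_mul, abs_two]
      _ ≤ |a| + 2 * |z| * |b| := by nlinarith [abs_nonneg b]
  have hWs : 1 + |VV u a b zs| ≤ 1 + |u| + |z| * |a| + |z| ^ 2 * |b| := by linarith
  have hWs0 : (0:ℝ) ≤ 1 + |u| + |z| * |a| + |z| ^ 2 * |b| := by positivity
  -- uniform D bounds
  have hD1b : |D1 β (VV u a b zs)| ≤
      104 * β ^ 3 * (1 + |u| + |z| * |a| + |z| ^ 2 * |b|) := by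
    have h := abs_D1_le hβ (VV u a b zs)
    nlinarith [abs_nonneg (VV u a b zs)]
  have hD2b : |D2 β (VV u a b zs)| ≤
      104 * β ^ 3 * (1 + |u| + |z| * |a| + |z| ^ 2 * |b|) := by
    have h := abs_D2_le hβ (VV u a b zs)
    have hb : β ≤ β ^ 3 := by
      have key : 0 ≤ β * (β - 1) * (β + 1) := by
        apply mul_nonneg (mul_nonneg hβ0.le (by linarith)) (by linarith)
      nlinarith [key]
    nlinarith [abs_nonneg (VV u a b zs)]
  have hD3b : |D3 β (VV u a b zs)| ≤
      104 * β ^ 3 * (1 + |u| + |z| * |a| + |z| ^ 2 * |b|) := by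
    have h := abs_D3_le hβ (VV u a b zs)
    have hb : β ^ 2 ≤ β ^ 3 := by
      have key : 0 ≤ β * β * (β - 1) := by
        apply mul_nonneg (mul_nonneg hβ0.le hβ0.le) (by linarith)
      nlinarith [key]
    nlinarith [abs_nonneg (VV u a b zs)]
  have hD4b : |D4 β (VV u a b zs)| ≤
      104 * β ^ 3 * (1 + |u| + |z| * |a| + |z| ^ 2 * |b|) := by
    have h := abs_D4_le hβ (VV u a b zs)
    nlinarith [abs_nonneg (VV u a b zs)]
  have hb3 : (0:ℝ) ≤ 104 * β ^ 3 := by positivity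
  simp only [Finset.mem_insert, Finset.mem_singleton] at hj
  rcases hj with rfl | rfl | rfl | rfl
  · -- j = 1
    have hkey := fun e1 e2 e3 e4 h1 h2 h3 h4 hc =>
      mono_le_S |z| |a| |b| |u| hM hA hB hU 1 e1 e2 e3 e4 h1 h2 h3 h4 hc
    have hS0 := S_nonneg |z| |a| |b| |u| hM hA hB hU 1
    have hp := poly1_le |z| |a| |b| |u| _ hS0 hkey
    rw [hfg, i1]
    have e1 : |g1 β u a b zs| ≤
        (104 * β ^ 3 * (1 + |u| + |z| * |a| + |z| ^ 2 * |b|)) * (|a| + 2 * |z| * |b|) := by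
      simp only [g1]
      rw [abs_mul]
      exact mul_le_mul hD1b hW1 (abs_nonneg _) (by positivity)
    have hp' := mul_le_mul_of_nonneg_left hp hb3
    linarith [hp', e1]
  · -- j = 2
    have hkey := fun e1 e2 e3 e4 h1 h2 h3 h4 hc =>
      mono_le_S |z| |a| |b| |u| hM hA hB hU 2 e1 e2 e3 e4 h1 h2 h3 h4 hc
    have hS0 := S_nonneg |z| |a| |b| |u| hM hA hB hU 2
    have hp := poly2_le |z| |a| |b| |u| _ hS0 hkey
    rw [hfg, i2]
    have hW2 : |W1 a b zs| ^ 2 ≤ (|a| + 2 * |z| * |b|) ^ 2 :=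
      pow_le_pow_left₀ (abs_nonneg _) hW1 2
    have e1 : |D2 β (VV u a b zs) * W1 a b zs ^ 2| ≤
        (104 * β ^ 3 * (1 + |u| + |z| * |a| + |z| ^ 2 * |b|)) * (|a| + 2 * |z| * |b|) ^ 2 := by
      rw [abs_mul, abs_pow]
      exact mul_le_mul hD2b hW2 (by positivity) (by positivity)
    have e2 : |D1 β (VV u a b zs) * (2 * b)| ≤
        (104 * β ^ 3 * (1 + |u| + |z| * |a| + |z| ^ 2 * |b|)) * (2 * |b|) := by
      rw [abs_mul, abs_mul, abs_two]
      exact mul_le_mul hD1b (le_refl _) (by positivity) (by positivity)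
    have habs : |g2 β u a b zs| ≤ |D2 β (VV u a b zs) * W1 a b zs ^ 2| +
        |D1 β (VV u a b zs) * (2 * b)| := by
      simp only [g2]; exact abs_add_le _ _
    have hp' := mul_le_mul_of_nonneg_left hp hb3
    linarith [hp', e1, e2, habs]
  · -- j = 3
    have hkey := fun e1 e2 e3 e4 h1 h2 h3 h4 hc =>
      mono_le_S |z| |a| |b| |u| hM hA hB hU 3 e1 e2 e3 e4 h1 h2 h3 h4 hc
    have hS0 := S_nonneg |z| |a| |b| |u| hM hA hB hU 3
    have hp := poly3_le |z| |a| |b| |u| _ hS0 hkey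
    rw [hfg, i3]
    have hW3 : |W1 a b zs| ^ 3 ≤ (|a| + 2 * |z| * |b|) ^ 3 :=
      pow_le_pow_left₀ (abs_nonneg _) hW1 3
    have e1 : |D3 β (VV u a b zs) * W1 a b zs ^ 3| ≤
        (104 * β ^ 3 * (1 + |u| + |z| * |a| + |z| ^ 2 * |b|)) * (|a| + 2 * |z| * |b|) ^ 3 := by
      rw [abs_mul, abs_pow]
      exact mul_le_mul hD3b hW3 (by positivity) (by positivity)
    have e2 : |6 * b * D2 β (VV u a b zs) * W1 a b zs| ≤
        6 * |b| * ((104 * β ^ 3 * (1 + |u| + |z| * |a| + |z| ^ 2 * |b|)) *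
          (|a| + 2 * |z| * |b|)) := by
      have heq : |6 * b * D2 β (VV u a b zs) * W1 a b zs| =
          6 * |b| * (|D2 β (VV u a b zs)| * |W1 a b zs|) := by
        rw [abs_mul, abs_mul, abs_mul]
        have : |(6:ℝ)| = 6 := by norm_num
        rw [this]; ring
      rw [heq]
      apply mul_le_mul_of_nonneg_left _ (by positivity : (0:ℝ) ≤ 6 * |b|)
      exact mul_le_mul hD2b hW1 (abs_nonneg _) (by positivity)
    have habs : |g3 β u a b zs| ≤ |D3 β (VV u a b zs) * W1 a b zs ^ 3| +
        |6 * b * D2 β (VV u a b zs) * W1 a b zs| := by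
      simp only [g3]; exact abs_add_le _ _
    have hp' := mul_le_mul_of_nonneg_left hp hb3
    linarith [hp', e1, e2, habs]
  · -- j = 4
    have hkey := fun e1 e2 e3 e4 h1 h2 h3 h4 hc =>
      mono_le_S |z| |a| |b| |u| hM hA hB hU 4 e1 e2 e3 e4 h1 h2 h3 h4 hc
    have hS0 := S_nonneg |z| |a| |b| |u| hM hA hB hU 4
    have hp := poly4_le |z| |a| |b| |u| _ hS0 hkey
    rw [hfg, i4]
    have hW4 : |W1 a b zs| ^ 4 ≤ (|a| + 2 * |z| * |b|) ^ 4 :=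
      pow_le_pow_left₀ (abs_nonneg _) hW1 4
    have hW2 : |W1 a b zs| ^ 2 ≤ (|a| + 2 * |z| * |b|) ^ 2 :=
      pow_le_pow_left₀ (abs_nonneg _) hW1 2
    have e1 : |D4 β (VV u a b zs) * W1 a b zs ^ 4| ≤
        (104 * β ^ 3 * (1 + |u| + |z| * |a| + |z| ^ 2 * |b|)) * (|a| + 2 * |z| * |b|) ^ 4 := by
      rw [abs_mul, abs_pow]
      exact mul_le_mul hD4b hW4 (by positivity) (by positivity)
    have e2 : |12 * b * D3 β (VV u a b zs) * W1 a b zs ^ 2| ≤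
        12 * |b| * ((104 * β ^ 3 * (1 + |u| + |z| * |a| + |z| ^ 2 * |b|)) *
          (|a| + 2 * |z| * |b|) ^ 2) := by
      have heq : |12 * b * D3 β (VV u a b zs) * W1 a b zs ^ 2| =
          12 * |b| * (|D3 β (VV u a b zs)| * |W1 a b zs| ^ 2) := by
        rw [abs_mul, abs_mul, abs_mul, abs_pow]
        have : |(12:ℝ)| = 12 := by norm_num
        rw [this]; ring
      rw [heq]
      apply mul_le_mul_of_nonneg_left _ (by positivity : (0:ℝ) ≤ 12 * |b|)
      exact mul_le_mul hD3b hW2 (by positivity) (by positivity)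
    have e3 : |12 * b ^ 2 * D2 β (VV u a b zs)| ≤
        12 * |b| ^ 2 * (104 * β ^ 3 * (1 + |u| + |z| * |a| + |z| ^ 2 * |b|)) := by
      have heq : |12 * b ^ 2 * D2 β (VV u a b zs)| =
          12 * |b| ^ 2 * |D2 β (VV u a b zs)| := by
        rw [abs_mul, abs_mul, abs_pow]
        have : |(12:ℝ)| = 12 := by norm_num
        rw [this]
      rw [heq]
      exact mul_le_mul_of_nonneg_left hD2b (by positivity)
    have habs : |g4 β u a b zs| ≤ |D4 β (VV u a b zs) * W1 a b zs ^ 4| +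
        |12 * b * D3 β (VV u a b zs) * W1 a b zs ^ 2| +
        |12 * b ^ 2 * D2 β (VV u a b zs)| := by
      simp only [g4]
      have t1 := abs_add_le (D4 β (VV u a b zs) * W1 a b zs ^ 4 +
        12 * b * D3 β (VV u a b zs) * W1 a b zs ^ 2) (12 * b ^ 2 * D2 β (VV u a b zs))
      have t2 := abs_add_le (D4 β (VV u a b zs) * W1 a b zs ^ 4)
        (12 * b * D3 β (VV u a b zs) * W1 a b zs ^ 2)
      linarith
    have hp' := mul_le_mul_of_nonneg_left hp hb3
    linarith [hp', e1, e2, e3, habs]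
end
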